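/- arXiv:2602.09728 — 3 statements merged into one kernel-verified Lean document; each statement's English description precedes it below -/
import Mathlib

section
/- Proposition 2 (More backloaded than efficient). Let (v^{B,T}_t)_{t=1}^T be the unique maximizer of Problem B(T) and (v^{E,T}_t)_{t=1}^T the unique maximizer of Problem E(T). Then: (i) v^{B,T}_1 ≥ v^{E,T}_1; (ii) if for some t one has v^{E,T}_t ≥ v^{B,T}_t and v^{E,T}_t > 0, then v^{E,T}_s ≥ v^{B,T}_s for all s > t, and when t ≤ T−2 this inequality is strict for every s > t with v^{E,T}_s > 0; (iii) if v^{B,T}_t > v^{E,T}_t for some t, then there exists t' > t with v^{B,T}_{t'} < v^{E,T}_{t'}, and then v^{E,T}_s ≥ v^{B,T}_s for all s ≥ t'. -/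
open Set Filter Topology

namespace Stmt0Aux

variable {φ : ℝ → ℝ}

lemma phile (hφm : StrictMonoOn φ (Set.Ici 0)) {u v : ℝ} (hu : 0 ≤ u) (huv : u ≤ v) :
    φ u ≤ φ v := by
  rcases eq_or_lt_of_le huv with rfl|h
  · exact le_rfl
  · exact (hφm hu (le_trans hu huv) h).le

lemma phirefl (hφm : StrictMonoOn φ (Set.Ici 0)) {u v : ℝ} (hu : 0 ≤ u) (hv : 0 ≤ v)
    (h : φ u ≤ φ v) : u ≤ v := by
  by_contra hc
  push_neg at hc
  exact absurd h (not_le.mpr (hφm hv hu hc))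

lemma phirefl_lt (hφm : StrictMonoOn φ (Set.Ici 0)) {u v : ℝ} (hu : 0 ≤ u) (hv : 0 ≤ v)
    (h : φ u < φ v) : u < v := by
  by_contra hc
  push_neg at hc
  exact absurd (phile hφm hv hc) (not_le.mpr h)

lemma phinn (hφm : StrictMonoOn φ (Set.Ici 0)) (hφ0 : φ 0 = 0) {u : ℝ} (hu : 0 ≤ u) :
    0 ≤ φ u := by
  have := phile hφm le_rfl hu
  rwa [hφ0] at this

/-- multiplicative adjacent slope monotonicity -/
lemma sm_adj (hconv : ConvexOn ℝ (Set.Ici 0) φ) {u v w : ℝ} (hu : 0 ≤ u)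
    (huv : u < v) (hvw : v < w) :
    (φ v - φ u) * (w - v) ≤ (φ w - φ v) * (v - u) := by
  have h := hconv.slope_mono_adjacent (show u ∈ Set.Ici 0 from hu)
    (show w ∈ Set.Ici 0 from by simp only [Set.mem_Ici]; linarith) huv hvw
  rw [div_le_div_iff₀ (by linarith) (by linarith)] at h
  linarith

lemma sm_left (hconv : ConvexOn ℝ (Set.Ici 0) φ) {u v w : ℝ} (hu : 0 ≤ u)
    (huv : u < v) (hvw : v ≤ w) :
    (φ v - φ u) * (w - u) ≤ (φ w - φ u) * (v - u) := by
  rcases eq_or_lt_of_le hvw with rfl|h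
  · exact le_rfl
  · have h1 := sm_adj hconv hu huv h
    nlinarith [h1]

lemma sm_right (hconv : ConvexOn ℝ (Set.Ici 0) φ) {u v w : ℝ} (hu : 0 ≤ u)
    (huv : u ≤ v) (hvw : v < w) :
    (φ w - φ u) * (w - v) ≤ (φ w - φ v) * (w - u) := by
  rcases eq_or_lt_of_le huv with rfl|h
  · exact le_of_eq (by ring)
  · have h1 := sm_adj hconv hu h hvw
    nlinarith [h1]

end Stmt0Aux
open Set Filter Topology

namespace Stmt0Aux2

variable {φ : ℝ → ℝ}

lemma chord (hconv : ConvexOn ℝ (Set.Ici 0) φ) {a b x : ℝ} (ha : 0 ≤ a) (hab : a < b)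
    (hax : a ≤ x) (hxb : x ≤ b) : φ x * (b - a) ≤ (b - x) * φ a + (x - a) * φ b := by
  have hb : (0:ℝ) ≤ b := le_trans ha hab.le
  have hba : (0:ℝ) < b - a := by linarith
  have h := hconv.2 (show a ∈ Set.Ici 0 from ha) (show b ∈ Set.Ici 0 from hb)
    (div_nonneg (by linarith : (0:ℝ) ≤ b - x) hba.le)
    (div_nonneg (by linarith : (0:ℝ) ≤ x - a) hba.le)
    (by field_simp; ring)
  have harg : ((b - x)/(b - a)) • a + ((x - a)/(b - a)) • b = x := by
    simp only [smul_eq_mul]; field_simp; ring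
  rw [harg] at h
  simp only [smul_eq_mul] at h
  rw [div_mul_eq_mul_div, div_mul_eq_mul_div, ← add_div, le_div_iff₀ hba] at h
  linarith

lemma chord_strict (hconv : StrictConvexOn ℝ (Set.Ici 0) φ) {a b x : ℝ} (ha : 0 ≤ a)
    (hab : a < b) (hax : a < x) (hxb : x < b) :
    φ x * (b - a) < (b - x) * φ a + (x - a) * φ b := by
  have hb : (0:ℝ) ≤ b := le_trans ha hab.le
  have hba : (0:ℝ) < b - a := by linarith
  have h := hconv.2 (show a ∈ Set.Ici 0 from ha) (show b ∈ Set.Ici 0 from hb)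
    (ne_of_lt hab)
    (div_pos (by linarith : (0:ℝ) < b - x) hba)
    (div_pos (by linarith : (0:ℝ) < x - a) hba)
    (by field_simp; ring)
  have harg : ((b - x)/(b - a)) • a + ((x - a)/(b - a)) • b = x := by
    simp only [smul_eq_mul]; field_simp; ring
  rw [harg] at h
  simp only [smul_eq_mul] at h
  rw [div_mul_eq_mul_div, div_mul_eq_mul_div, ← add_div, lt_div_iff₀ hba] at h
  linarith

lemma phistrict (hφm : StrictMonoOn φ (Set.Ici 0)) {a b : ℝ} (ha : 0 ≤ a) (hab : a < b) :
    φ a < φ b := hφm ha (le_trans ha hab.le) hab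

/-- weak sum comparison: if φ x + φ x' = φ a + φ b with x, x' in [a,b], then a+b ≤ x+x' -/
lemma conv_sum (hφm : StrictMonoOn φ (Set.Ici 0)) (hconv : ConvexOn ℝ (Set.Ici 0) φ)
    {a b x x' : ℝ} (ha : 0 ≤ a) (hab : a < b)
    (h1 : a ≤ x) (h2 : x ≤ b) (h3 : a ≤ x') (h4 : x' ≤ b)
    (hsum : φ x + φ x' = φ a + φ b) : a + b ≤ x + x' := by
  have c1 := chord hconv ha hab h1 h2
  have c2 := chord hconv ha hab h3 h4
  have hphab := phistrict hφm ha hab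
  nlinarith [c1, c2, hphab]

/-- strict version with x strictly inside -/
lemma conv_sum_strict (hφm : StrictMonoOn φ (Set.Ici 0)) (hconv : StrictConvexOn ℝ (Set.Ici 0) φ)
    {a b x x' : ℝ} (ha : 0 ≤ a) (hab : a < b)
    (h1 : a < x) (h2 : x < b) (h3 : a ≤ x') (h4 : x' ≤ b)
    (hsum : φ x + φ x' = φ a + φ b) : a + b < x + x' := by
  have c1 := chord_strict hconv ha hab h1 h2
  have c2 := chord hconv.convexOn ha hab h3 h4
  have hphab := phistrict hφm ha hab
  nlinarith [c1, c2, hphab]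

/-- surjectivity of φ onto [0,∞) -/
lemma surj (hφc : ContinuousOn φ (Set.Ici 0)) (hφm : StrictMonoOn φ (Set.Ici 0))
    (hconv : ConvexOn ℝ (Set.Ici 0) φ) (hφ0 : φ 0 = 0) {w : ℝ} (hw : 0 ≤ w) :
    ∃ x, 0 ≤ x ∧ φ x = w := by
  have h1 : 0 < φ 1 := by
    have := phistrict hφm le_rfl one_pos
    rwa [hφ0] at this
  set B := w / φ 1 + 2 with hB
  have hB1 : 1 < B := by
    have : 0 ≤ w / φ 1 := div_nonneg hw h1.le
    simp only [hB]; linarith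
  have hgrow : φ 1 * B ≤ φ B := by
    have h := Stmt0Aux.sm_adj hconv (u := 0) (v := 1) (w := B) le_rfl one_pos hB1
    rw [hφ0] at h
    nlinarith [h]
  have hwB : w ≤ φ B := by
    have : φ 1 * B = w + 2 * φ 1 := by
      rw [hB, mul_add, mul_div_assoc', mul_comm (φ 1) w, mul_div_assoc, div_self h1.ne', mul_one]; ring
    nlinarith [hgrow, h1]
  have hIcc : Set.Icc (φ 0) (φ B) ⊆ φ '' Set.Icc 0 B := by
    apply intermediate_value_Icc (by linarith : (0:ℝ) ≤ B)
    exact hφc.mono (Set.Icc_subset_Ici_self)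
  have hwmem : w ∈ Set.Icc (φ 0) (φ B) := by
    rw [hφ0]; exact ⟨hw, hwB⟩
  obtain ⟨x, hx, hφx⟩ := hIcc hwmem
  exact ⟨x, hx.1, hφx⟩

end Stmt0Aux2
open Set Filter Topology
namespace Stmt0Aux3
variable {φ : ℝ → ℝ}

lemma band (hφm : StrictMonoOn φ (Set.Ici 0))
    (hconv : ConvexOn ℝ (Set.Ici 0) φ) (hφ0 : φ 0 = 0)
    (hdiff : DifferentiableOn ℝ φ (Set.Ioi 0))
    {c κ : ℝ} (hc : 0 < c) (hκ : 1 < κ) :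
    ∃ m, 0 < m ∧ m ≤ φ c ∧ ∀ e x x', 0 < e → e ≤ m → 0 ≤ x → 0 ≤ x' →
      φ x = φ c - e → φ x' = φ c + e → c - x ≤ κ * (x' - c) := by
  have hda : DifferentiableAt ℝ φ c := (hdiff c hc).differentiableAt (Ioi_mem_nhds hc)
  have hder : HasDerivAt φ (deriv φ c) c := hda.hasDerivAt
  set P := deriv φ c with hP
  have htend : Tendsto (slope φ c) (𝓝[≠] c) (𝓝 P) := hasDerivAt_iff_tendsto_slope.mp hder
  have hc2 : 0 < c / 2 := by linarith
  have hφc2 : φ (c/2) < φ c := hφm (le_of_lt hc2) hc.le (by linarith)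
  set s0 := (φ c - φ (c/2)) / (c - c/2) with hs0def
  have hs0 : 0 < s0 := div_pos (by linarith) (by linarith)
  -- slope φ c v ≥ s0 for v > c
  have hev : ∀ v, c < v → s0 ≤ slope φ c v := by
    intro v hv
    have h := Stmt0Aux.sm_adj hconv (u := c/2) (v := c) (w := v) hc2.le (by linarith) hv
    rw [slope_def_field, hs0def, div_le_div_iff₀ (by linarith) (by linarith)]
    nlinarith [h]
  have hPs0 : s0 ≤ P := by
    have hmono : 𝓝[Set.Ioi c] c ≤ 𝓝[≠] c :=
      nhdsWithin_mono c (fun u hu => ne_of_gt hu)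
    refine ge_of_tendsto (htend.mono_left hmono) ?_
    exact eventually_nhdsWithin_of_forall (fun v hv => hev v hv)
  have hPpos : 0 < P := lt_of_lt_of_le hs0 hPs0
  set ε := P * (κ - 1) / (κ + 1) with hεdef
  have hεpos : 0 < ε := by
    apply div_pos (mul_pos hPpos (by linarith)) (by linarith)
  have hPε : 0 < P - ε := by
    have : ε < P := by
      rw [hεdef, div_lt_iff₀ (by linarith : (0:ℝ) < κ + 1)]
      nlinarith
    linarith
  have hκPε : κ * (P - ε) = P + ε := by
    rw [hεdef]; field_simp; ring
  obtain ⟨δ, hδ0, hδ⟩ : ∃ δ > 0, ∀ u : ℝ, u ≠ c → dist u c < δ → dist (slope φ c u) P < ε := by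
    have := Metric.tendsto_nhdsWithin_nhds.mp htend ε hεpos
    obtain ⟨δ, hδ0, hh⟩ := this
    exact ⟨δ, hδ0, fun u hu hd => hh hu hd⟩
  set δ' := min (δ/2) (c/2) with hδ'def
  have hδ'0 : 0 < δ' := lt_min (by linarith) hc2
  have hδ'c : δ' ≤ c/2 := min_le_right _ _
  have hδ'δ : δ' < δ := lt_of_le_of_lt (min_le_left _ _) (by linarith)
  have hcd0 : 0 < c - δ' := by linarith
  have hm1 : φ (c - δ') < φ c := hφm hcd0.le hc.le (by linarith)
  have hm2 : φ c < φ (c + δ') := hφm hc.le (show (0:ℝ) ≤ c + δ' by linarith) (by linarith)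
  refine ⟨min (φ c - φ (c - δ')) (φ (c + δ') - φ c),
    lt_min (by linarith) (by linarith), ?_, ?_⟩
  · have : (0:ℝ) ≤ φ (c - δ') := Stmt0Aux.phinn hφm hφ0 hcd0.le
    calc min (φ c - φ (c - δ')) (φ (c + δ') - φ c) ≤ φ c - φ (c - δ') := min_le_left _ _
      _ ≤ φ c := by linarith
  · intro e x x' he hem hx hx' hfx hfx'
    have hem1 : e ≤ φ c - φ (c - δ') := le_trans hem (min_le_left _ _)
    have hem2 : e ≤ φ (c + δ') - φ c := le_trans hem (min_le_right _ _)
    -- x ∈ [c - δ', c)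
    have hxlb : c - δ' ≤ x :=
      Stmt0Aux.phirefl hφm hcd0.le hx (by rw [hfx]; linarith)
    have hxc : x < c := Stmt0Aux.phirefl_lt hφm hx hc.le (by rw [hfx]; linarith)
    have hx'ub : x' ≤ c + δ' :=
      Stmt0Aux.phirefl hφm hx' (by linarith) (by rw [hfx']; linarith)
    have hx'c : c < x' := Stmt0Aux.phirefl_lt hφm hc.le hx' (by rw [hfx']; linarith)
    have h1 := hδ x (ne_of_lt hxc) (by rw [Real.dist_eq, abs_of_nonpos (by linarith)]; linarith)
    have h2 := hδ x' (ne_of_gt hx'c) (by rw [Real.dist_eq, abs_of_nonneg (by linarith)]; linarith)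
    rw [Real.dist_eq] at h1 h2
    have hs1 : slope φ c x = e / (c - x) := by
      rw [slope_def_field, hfx, div_eq_div_iff (by linarith) (by linarith)]; ring
    have hs2 : slope φ c x' = e / (x' - c) := by
      rw [slope_def_field, hfx', div_eq_div_iff (by linarith) (by linarith)]; ring
    rw [hs1] at h1
    rw [hs2] at h2
    have h1' : P - ε < e / (c - x) := by
      have := abs_lt.mp h1; linarith [this.1]
    have h2' : e / (x' - c) < P + ε := by
      have := abs_lt.mp h2; linarith [(abs_lt.mp h2).2]
    have hb1 : (P - ε) * (c - x) < e := by
      rw [lt_div_iff₀ (by linarith : (0:ℝ) < c - x)] at h1'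
      linarith
    have hb2 : e < (P + ε) * (x' - c) := by
      rw [div_lt_iff₀ (by linarith : (0:ℝ) < x' - c)] at h2'
      linarith
    -- conclude
    have he : (P + ε) * (x' - c) = (P - ε) * (κ * (x' - c)) := by rw [← hκPε]; ring
    rw [he] at hb2
    have hb3 : (P - ε) * (c - x) < (P - ε) * (κ * (x' - c)) := lt_trans hb1 hb2
    exact le_of_lt ((mul_lt_mul_iff_right₀ hPε).mp hb3)
end Stmt0Aux3
open Set Filter Topology
namespace Stmt0Aux4

lemma sum_update_eq (s : Finset ℕ) (F : ℕ → ℝ → ℝ) (v : ℕ → ℝ) {p : ℕ} (hp : p ∈ s) (x : ℝ) :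
    ∑ t ∈ s, F t (Function.update v p x t) = ∑ t ∈ s, F t (v t) - F p (v p) + F p x := by
  have h1 : ∑ t ∈ s.erase p, F t (Function.update v p x t) = ∑ t ∈ s.erase p, F t (v t) :=
    Finset.sum_congr rfl fun t ht => by
      rw [Function.update_of_ne (Finset.ne_of_mem_erase ht)]
  rw [← Finset.add_sum_erase s (fun t => F t (Function.update v p x t)) hp,
      ← Finset.add_sum_erase s (fun t => F t (v t)) hp, h1, Function.update_self]
  ring

lemma sum_update2 (s : Finset ℕ) (F : ℕ → ℝ → ℝ) (v : ℕ → ℝ) {p q : ℕ}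
    (hp : p ∈ s) (hq : q ∈ s) (hpq : p ≠ q) (x y : ℝ) :
    ∑ t ∈ s, F t (Function.update (Function.update v p x) q y t)
      = ∑ t ∈ s, F t (v t) - F p (v p) - F q (v q) + F p x + F q y := by
  rw [sum_update_eq s F _ hq y, sum_update_eq s F v hp x,
    Function.update_of_ne hpq.symm]
  ring

lemma pairwise_opt (T : ℕ) (R I : ℝ) (φ : ℝ → ℝ) (w v : ℕ → ℝ)
    (hN : ∀ t ∈ Finset.Icc 1 T, 0 ≤ v t)
    (hB : ∑ t ∈ Finset.Icc 1 T, φ (v t) / R ^ (t - 1) ≤ I)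
    (hM : ∀ u : ℕ → ℝ, (∀ t ∈ Finset.Icc 1 T, 0 ≤ u t) →
      (∑ t ∈ Finset.Icc 1 T, φ (u t) / R ^ (t - 1) ≤ I) →
      ∑ t ∈ Finset.Icc 1 T, w t * u t ≤ ∑ t ∈ Finset.Icc 1 T, w t * v t)
    {p q : ℕ} (hp : p ∈ Finset.Icc 1 T) (hq : q ∈ Finset.Icc 1 T) (hpq : p ≠ q) :
    ∀ x y : ℝ, 0 ≤ x → 0 ≤ y →
      φ x / R ^ (p - 1) + φ y / R ^ (q - 1) ≤ φ (v p) / R ^ (p - 1) + φ (v q) / R ^ (q - 1) →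
      w p * x + w q * y ≤ w p * v p + w q * v q := by
  intro x y hx hy hbud
  set u := Function.update (Function.update v p x) q y with hu
  have hun : ∀ t ∈ Finset.Icc 1 T, 0 ≤ u t := by
    intro t ht
    rcases eq_or_ne t q with rfl|h1
    · simp only [hu, Function.update_self]; exact hy
    · rcases eq_or_ne t p with rfl|h2
      · simp only [hu, Function.update_of_ne h1, Function.update_self]; exact hx
      · simp only [hu, Function.update_of_ne h1, Function.update_of_ne h2]; exact hN t ht
  have e1 : ∑ t ∈ Finset.Icc 1 T, φ (u t) / R ^ (t - 1)
      = ∑ t ∈ Finset.Icc 1 T, φ (v t) / R ^ (t - 1)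
        - φ (v p) / R ^ (p - 1) - φ (v q) / R ^ (q - 1)
        + φ x / R ^ (p - 1) + φ y / R ^ (q - 1) :=
    sum_update2 (Finset.Icc 1 T) (fun t z => φ z / R ^ (t - 1)) v hp hq hpq x y
  have hub : ∑ t ∈ Finset.Icc 1 T, φ (u t) / R ^ (t - 1) ≤ I := by
    rw [e1]; linarith
  have e2 : ∑ t ∈ Finset.Icc 1 T, w t * u t
      = ∑ t ∈ Finset.Icc 1 T, w t * v t - w p * v p - w q * v q + w p * x + w q * y :=
    sum_update2 (Finset.Icc 1 T) (fun t z => w t * z) v hp hq hpq x y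
  have := hM u hun hub
  rw [e2] at this
  linarith
end Stmt0Aux4
open Set Filter Topology
namespace Stmt0Aux5
open Stmt0Aux Stmt0Aux2 Stmt0Aux3

set_option maxHeartbeats 1000000 in
lemma UDL (φ : ℝ → ℝ)
    (hφc : ContinuousOn φ (Set.Ici 0)) (hφm : StrictMonoOn φ (Set.Ici 0))
    (hφconv : StrictConvexOn ℝ (Set.Ici 0) φ) (hφ0 : φ 0 = 0)
    (hdiff : DifferentiableOn ℝ φ (Set.Ioi 0))
    (Rp Rq : ℝ) (hRp : 0 < Rp) (hRq : 0 < Rq)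
    (wEp wEq wBp wBq : ℝ) (hwEp : 0 < wEp) (hwEq : 0 < wEq) (hwBp : 0 < wBp) (hwBq : 0 < wBq)
    (a b α βq : ℝ) (ha0 : 0 ≤ a) (hab : a ≤ b) (hb : 0 < b)
    (hα0 : 0 ≤ α) (hαβ : α ≤ βq) (hβq : 0 < βq)
    (hW : wEp * wBq ≤ wEq * wBp)
    (hstrict : wEp * wBq < wEq * wBp ∨ α < βq)
    (hEopt : ∀ x y, 0 ≤ x → 0 ≤ y → φ x / Rp + φ y / Rq ≤ φ b / Rp + φ α / Rq →
      wEp * x + wEq * y ≤ wEp * b + wEq * α)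
    (hBopt : ∀ x y, 0 ≤ x → 0 ≤ y → φ x / Rp + φ y / Rq ≤ φ a / Rp + φ βq / Rq →
      wBp * x + wBq * y ≤ wBp * a + wBq * βq) : False := by
  have hconv := hφconv.convexOn
  have hφa : 0 ≤ φ a := phinn hφm hφ0 ha0
  have hφα : 0 ≤ φ α := phinn hφm hφ0 hα0
  -- p-side bound provider
  have pside : ∀ κ : ℝ, 1 < κ → ∃ m, 0 < m ∧ m ≤ φ b ∧
      ∀ e x x', 0 < e → e ≤ m → 0 ≤ x → 0 ≤ x' →
        φ x = φ b - e → φ x' = φ a + e → b - x ≤ κ * (x' - a) := by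
    intro κ hκ
    rcases eq_or_lt_of_le hab with heq|hlt
    · subst heq
      obtain ⟨m, hm0, hmb, hP⟩ := band hφm hconv hφ0 hdiff hb hκ
      exact ⟨m, hm0, hmb, fun e x x' he hem hx hx' hfx hfx' =>
        hP e x x' he hem hx hx' hfx hfx'⟩
    · have hgap : 0 < φ b - φ a := by
        have := phistrict hφm ha0 hlt; linarith
      refine ⟨φ b - φ a, hgap, by linarith, ?_⟩
      intro e x x' he hem hx hx' hfx hfx'
      have hxa : a ≤ x := phirefl hφm ha0 hx (by rw [hfx]; linarith)
      have hxb2 : x ≤ b := phirefl hφm hx (by linarith) (by rw [hfx]; linarith)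
      have hx'a : a ≤ x' := phirefl hφm ha0 hx' (by rw [hfx']; linarith)
      have hx'b : x' ≤ b := phirefl hφm hx' (by linarith) (by rw [hfx']; linarith)
      have hsum : φ x + φ x' = φ a + φ b := by rw [hfx, hfx']; ring
      have hcs := conv_sum hφm hconv ha0 hlt hxa hxb2 hx'a hx'b hsum
      nlinarith [hcs, hκ]
  rcases eq_or_lt_of_le hαβ with heq|hlt
  · -- α = βq : need strict weights
    subst heq
    have hWs : wEp * wBq < wEq * wBp := hstrict.resolve_right (lt_irrefl α)
    set ρ := (wEq * wBp) / (wEp * wBq) with hρdef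
    have hden : 0 < wEp * wBq := mul_pos hwEp hwBq
    have hρ1 : 1 < ρ := (one_lt_div hden).mpr hWs
    have hρ0 : 0 < ρ := lt_trans one_pos hρ1
    have hsρ : 1 < Real.sqrt ρ := by
      rw [show (1:ℝ) = Real.sqrt 1 by simp]
      exact Real.sqrt_lt_sqrt (by norm_num) hρ1
    set κ := Real.sqrt (Real.sqrt ρ) with hκdef
    have hκ1 : 1 < κ := by
      rw [hκdef, show (1:ℝ) = Real.sqrt 1 by simp]
      exact Real.sqrt_lt_sqrt (by norm_num) hsρ
    have hκκ : κ * κ = Real.sqrt ρ := Real.mul_self_sqrt (Real.sqrt_nonneg ρ)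
    have hsρρ : Real.sqrt ρ < ρ := by
      nlinarith [Real.sq_sqrt hρ0.le, Real.sqrt_nonneg ρ, hsρ]
    obtain ⟨m1, hm10, hm1b, hP1⟩ := pside κ hκ1
    obtain ⟨m2, hm20, hm2d, hP2⟩ := band hφm hconv hφ0 hdiff hβq hκ1
    set η := min (m1 / Rp) (m2 / Rq) with hηdef
    have hη0 : 0 < η := lt_min (div_pos hm10 hRp) (div_pos hm20 hRq)
    have hep0 : 0 < η * Rp := mul_pos hη0 hRp
    have heq0 : 0 < η * Rq := mul_pos hη0 hRq
    have hepm : η * Rp ≤ m1 := by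
      rw [← le_div_iff₀ hRp]; exact min_le_left _ _
    have heqm : η * Rq ≤ m2 := by
      rw [← le_div_iff₀ hRq]; exact min_le_right _ _
    obtain ⟨x, hx0, hxe⟩ := surj hφc hφm hconv hφ0 (show 0 ≤ φ b - η * Rp by linarith)
    obtain ⟨x', hx'0, hx'e⟩ := surj hφc hφm hconv hφ0 (show 0 ≤ φ a + η * Rp by linarith)
    obtain ⟨y, hy0, hye⟩ := surj hφc hφm hconv hφ0 (show 0 ≤ φ α + η * Rq by linarith)
    obtain ⟨y', hy'0, hy'e⟩ := surj hφc hφm hconv hφ0 (show 0 ≤ φ α - η * Rq by linarith)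
    have hbx : 0 < b - x := by
      have := phirefl_lt hφm hx0 hb.le (by rw [hxe]; linarith)
      linarith
    have hx'a : 0 < x' - a := by
      have := phirefl_lt hφm ha0 hx'0 (by rw [hx'e]; linarith)
      linarith
    have hyα : 0 < y - α := by
      have := phirefl_lt hφm hα0 hy0 (by rw [hye]; linarith)
      linarith
    have hE := hEopt x y hx0 hy0 (le_of_eq (by rw [hxe, hye]; field_simp; ring))
    have hB := hBopt x' y' hx'0 hy'0 (le_of_eq (by rw [hx'e, hy'e]; field_simp; ring))
    have hE' : wEq * (y - α) ≤ wEp * (b - x) := by linarith [hE]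
    have hB' : wBp * (x' - a) ≤ wBq * (α - y') := by linarith [hB]
    have hpx : b - x ≤ κ * (x' - a) := hP1 (η * Rp) x x' hep0 hepm hx0 hx'0 hxe hx'e
    have hqy : α - y' ≤ κ * (y - α) := hP2 (η * Rq) y' y heq0 heqm hy'0 hy0 hy'e hye
    have h1 : wEq * (y - α) ≤ wEp * (κ * (x' - a)) :=
      hE'.trans (mul_le_mul_of_nonneg_left hpx hwEp.le)
    have h2 : wBp * (x' - a) ≤ wBq * (κ * (y - α)) :=
      hB'.trans (mul_le_mul_of_nonneg_left hqy hwBq.le)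
    have h3 := mul_le_mul h1 h2 (by positivity) (by positivity)
    have h5 : (wEq * wBp) * ((y - α) * (x' - a)) ≤
        ((wEp * wBq) * (κ * κ)) * ((y - α) * (x' - a)) := by linarith [h3]
    have h6 : wEq * wBp ≤ (wEp * wBq) * (κ * κ) :=
      le_of_mul_le_mul_right h5 (mul_pos hyα hx'a)
    rw [hκκ] at h6
    have h7 : (wEp * wBq) * Real.sqrt ρ < (wEp * wBq) * ρ :=
      mul_lt_mul_of_pos_left hsρρ hden
    have h8 : (wEp * wBq) * ρ = wEq * wBp := by
      rw [hρdef]; field_simp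
    linarith
  · -- α < βq
    have hφβ : φ βq = φ α + (φ βq - φ α) := by ring
    have hgpos : 0 < φ βq - φ α := by
      have := phistrict hφm hα0 hlt; linarith
    set g := φ βq - φ α with hgdef
    obtain ⟨Y, hY0, hYe⟩ := surj hφc hφm hconv hφ0 (show 0 ≤ φ α + g/3 by positivity)
    obtain ⟨Y', hY'0, hY'e⟩ := surj hφc hφm hconv hφ0 (show 0 ≤ φ α + 2*g/3 by positivity)
    have hαY : α < Y := phirefl_lt hφm hα0 hY0 (by rw [hYe]; linarith)
    have hYY' : Y < Y' := phirefl_lt hφm hY0 hY'0 (by rw [hYe, hY'e]; linarith)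
    have hY'β : Y' < βq := phirefl_lt hφm hY'0 hβq.le (by rw [hY'e, hgdef]; linarith)
    have hsumYY : φ Y + φ Y' = φ α + φ βq := by
      rw [hYe, hY'e, hgdef]; ring
    have hD := conv_sum_strict hφm hφconv hα0 hlt hαY (lt_trans hYY' hY'β)
      (le_of_lt (lt_trans hαY hYY')) hY'β.le hsumYY
    -- α + βq < Y + Y', so βq - Y' < Y - α
    have hD1 : 0 < Y - α := by linarith
    have hD2 : 0 < βq - Y' := by linarith
    have hD21 : βq - Y' < Y - α := by linarith
    set κ := (1 + (Y - α)/(βq - Y'))/2 with hκdef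
    have hr1 : 1 < (Y - α)/(βq - Y') := (one_lt_div hD2).mpr hD21
    have hκ1 : 1 < κ := by rw [hκdef]; linarith
    have hκD : κ * (βq - Y') < Y - α := by
      have e : κ * (βq - Y') = ((βq - Y') + (Y - α))/2 := by
        rw [hκdef]; field_simp
      rw [e]; linarith
    obtain ⟨m, hm0, hmb, hmP⟩ := pside κ hκ1
    set η := min (m / Rp) ((g/3) / Rq) with hηdef
    have hη0 : 0 < η := lt_min (div_pos hm0 hRp) (div_pos (by positivity) hRq)
    have hep0 : 0 < η * Rp := mul_pos hη0 hRp
    have heq0 : 0 < η * Rq := mul_pos hη0 hRq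
    have hepm : η * Rp ≤ m := by
      rw [← le_div_iff₀ hRp]; exact min_le_left _ _
    have heqg : η * Rq ≤ g/3 := by
      rw [← le_div_iff₀ hRq]; exact min_le_right _ _
    obtain ⟨x, hx0, hxe⟩ := surj hφc hφm hconv hφ0 (show 0 ≤ φ b - η * Rp by linarith)
    obtain ⟨x', hx'0, hx'e⟩ := surj hφc hφm hconv hφ0 (show 0 ≤ φ a + η * Rp by linarith)
    obtain ⟨y, hy0, hye⟩ := surj hφc hφm hconv hφ0 (show 0 ≤ φ α + η * Rq by linarith)
    obtain ⟨y', hy'0, hy'e⟩ := surj hφc hφm hconv hφ0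
      (show 0 ≤ φ βq - η * Rq by rw [hφβ]; linarith)
    have hbx : 0 < b - x := by
      have := phirefl_lt hφm hx0 hb.le (by rw [hxe]; linarith)
      linarith
    have hx'a : 0 < x' - a := by
      have := phirefl_lt hφm ha0 hx'0 (by rw [hx'e]; linarith)
      linarith
    have hyα : 0 < y - α := by
      have := phirefl_lt hφm hα0 hy0 (by rw [hye]; linarith)
      linarith
    have hy'β : y' < βq := phirefl_lt hφm hy'0 hβq.le (by rw [hy'e]; linarith)
    have hyY : y ≤ Y := phirefl hφm hy0 hY0 (by rw [hye, hYe]; linarith)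
    have hY'y' : Y' ≤ y' := phirefl hφm hY'0 hy'0 (by rw [hY'e, hy'e, hgdef]; linarith)
    have hE := hEopt x y hx0 hy0 (le_of_eq (by rw [hxe, hye]; field_simp; ring))
    have hB := hBopt x' y' hx'0 hy'0 (le_of_eq (by rw [hx'e, hy'e]; field_simp; ring))
    have hE' : wEq * (y - α) ≤ wEp * (b - x) := by linarith [hE]
    have hB' : wBp * (x' - a) ≤ wBq * (βq - y') := by linarith [hB]
    have hpx : b - x ≤ κ * (x' - a) := hmP (η * Rp) x x' hep0 hepm hx0 hx'0 hxe hx'e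
    -- combine to get y - α ≤ κ * (βq - y')
    have h1 : wEq * (y - α) ≤ wEp * (κ * (x' - a)) :=
      hE'.trans (mul_le_mul_of_nonneg_left hpx hwEp.le)
    have h2 := mul_le_mul h1 hB' (by positivity) (by positivity)
    have h3 : (wEp * wBq) * ((κ * (βq - y')) * (x' - a)) ≤
        (wEq * wBp) * ((κ * (βq - y')) * (x' - a)) := by
      apply mul_le_mul_of_nonneg_right hW
      have hby' : 0 ≤ βq - y' := by linarith
      positivity
    have h4 : (wEq * wBp) * ((y - α) * (x' - a)) ≤
        (wEq * wBp) * ((κ * (βq - y')) * (x' - a)) := by linarith [h2, h3]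
    have h6 : (y - α) * (x' - a) ≤ (κ * (βq - y')) * (x' - a) :=
      le_of_mul_le_mul_left h4 (mul_pos hwEq hwBp)
    have hyy : y - α ≤ κ * (βq - y') := le_of_mul_le_mul_right h6 hx'a
    -- slope bounds on the q side
    have hq1 : (η * Rq) * (Y - α) ≤ (g/3) * (y - α) := by
      have h := sm_left hconv hα0 (by linarith : α < y) hyY
      have e1 : φ y - φ α = η * Rq := by rw [hye]; ring
      have e2 : φ Y - φ α = g/3 := by rw [hYe]; ring
      rw [e1, e2] at h; exact h
    have hq2 : (g/3) * (βq - y') ≤ (η * Rq) * (βq - Y') := by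
      have h := sm_right hconv (u := Y') (v := y') (w := βq) hY'0 hY'y' hy'β
      have e1 : φ βq - φ Y' = g/3 := by rw [hY'e, hgdef]; ring
      have e2 : φ βq - φ y' = η * Rq := by rw [hy'e]; ring
      rw [e1, e2] at h; exact h
    -- final contradiction
    have s2 : (g/3) * (y - α) ≤ (g/3) * (κ * (βq - y')) :=
      mul_le_mul_of_nonneg_left hyy (by positivity)
    have s3 : (g/3) * (κ * (βq - y')) = κ * ((g/3) * (βq - y')) := by ring
    have s4 : κ * ((g/3) * (βq - y')) ≤ κ * ((η * Rq) * (βq - Y')) :=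
      mul_le_mul_of_nonneg_left hq2 (by linarith)
    have s5 : κ * ((η * Rq) * (βq - Y')) = (η * Rq) * (κ * (βq - Y')) := by ring
    have s6 : (η * Rq) * (κ * (βq - Y')) < (η * Rq) * (Y - α) :=
      mul_lt_mul_of_pos_left hκD heq0
    linarith [hq1, s2, s3, s4, s5, s6]
end Stmt0Aux5
open Set Filter Topology

set_option maxHeartbeats 1600000 in


/-- Proposition 2 (equilibrium consumption is more backloaded than
efficient).  `vE` is the (unique) maximizer of Problem E(T): maximize
`∑_{t=1}^{T-1} β^(t-1) v t + β^(T-2) δ₁ v T` over `v t ≥ 0` with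
`∑ φ(v t)/R^(t-1) ≤ I`, where `β = q₁δ₁ + q₂δ₂`; `vB` is the (unique) maximizer of
Problem B(T): maximize `∑_{t=1}^{T} δ₁^(t-1) v t` over the same constraint set.
Conclusions: (i) `vB 1 ≥ vE 1`; (ii) if `vE t ≥ vB t` and `vE t > 0` then
`vE s ≥ vB s` for all `s > t`, strictly for every `s > t` with `vE s > 0` provided
`t ≤ T-2`; (iii) if `vB t > vE t` then there is `t' > t` with `vB t' < vE t'`, and
`vE s ≥ vB s` for all `s ≥ t'`. -/
theorem stmt0
    (T : ℕ) (hT : 3 ≤ T)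
    (R I : ℝ) (hR : 1 ≤ R) (hI : 0 < I)
    (φ : ℝ → ℝ)
    (hφc : ContinuousOn φ (Set.Ici 0))
    (hφm : StrictMonoOn φ (Set.Ici 0))
    (hφconv : StrictConvexOn ℝ (Set.Ici 0) φ)
    (hφd : ContDiffOn ℝ 2 φ (Set.Ioi 0))
    (hφ0 : φ 0 = 0)
    (hφtend : Filter.Tendsto (deriv φ) Filter.atTop Filter.atTop)
    (δ1 δ2 q1 q2 β : ℝ) (hδ1 : 0 < δ1) (hδ12 : δ1 < δ2)
    (hq1 : 0 < q1) (hq2 : 0 < q2) (hqsum : q1 + q2 = 1)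
    (hβ : β = q1 * δ1 + q2 * δ2)
    (vB vE : ℕ → ℝ)
    -- vB solves Problem B(T)
    (hBnonneg : ∀ t ∈ Finset.Icc 1 T, 0 ≤ vB t)
    (hBbudget : ∑ t ∈ Finset.Icc 1 T, φ (vB t) / R ^ (t - 1) ≤ I)
    (hBmax : ∀ v : ℕ → ℝ, (∀ t ∈ Finset.Icc 1 T, 0 ≤ v t) →
      (∑ t ∈ Finset.Icc 1 T, φ (v t) / R ^ (t - 1) ≤ I) →
      ∑ t ∈ Finset.Icc 1 T, δ1 ^ (t - 1) * v t ≤ ∑ t ∈ Finset.Icc 1 T, δ1 ^ (t - 1) * vB t)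
    -- vE solves Problem E(T)
    (hEnonneg : ∀ t ∈ Finset.Icc 1 T, 0 ≤ vE t)
    (hEbudget : ∑ t ∈ Finset.Icc 1 T, φ (vE t) / R ^ (t - 1) ≤ I)
    (hEmax : ∀ v : ℕ → ℝ, (∀ t ∈ Finset.Icc 1 T, 0 ≤ v t) →
      (∑ t ∈ Finset.Icc 1 T, φ (v t) / R ^ (t - 1) ≤ I) →
      (∑ t ∈ Finset.Icc 1 (T - 1), β ^ (t - 1) * v t) + β ^ (T - 2) * δ1 * v T ≤
        (∑ t ∈ Finset.Icc 1 (T - 1), β ^ (t - 1) * vE t) + β ^ (T - 2) * δ1 * vE T) :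
    -- (i)
    (vE 1 ≤ vB 1) ∧
    -- (ii)
    (∀ t ∈ Finset.Icc 1 T, vB t ≤ vE t → 0 < vE t →
      (∀ s ∈ Finset.Icc 1 T, t < s → vB s ≤ vE s) ∧
      (t ≤ T - 2 → ∀ s ∈ Finset.Icc 1 T, t < s → 0 < vE s → vB s < vE s)) ∧
    -- (iii)
    (∀ t ∈ Finset.Icc 1 T, vE t < vB t →
      ∃ t' ∈ Finset.Icc 1 T, t < t' ∧ vB t' < vE t' ∧
        ∀ s ∈ Finset.Icc 1 T, t' ≤ s → vB s ≤ vE s) := by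
  have hR0 : (0:ℝ) < R := lt_of_lt_of_le one_pos hR
  have hβδ : δ1 < β := by
    have e : β - δ1 = q2 * (δ2 - δ1) := by
      have hq : q1 = 1 - q2 := by linarith
      rw [hβ, hq]; ring
    nlinarith [mul_pos hq2 (sub_pos.mpr hδ12)]
  have hβ0 : 0 < β := lt_trans hδ1 hβδ
  have hdiff : DifferentiableOn ℝ φ (Set.Ioi 0) := hφd.differentiableOn (by norm_num)
  set wE : ℕ → ℝ := fun t => if t = T then β ^ (T - 2) * δ1 else β ^ (t - 1) with hwEdef
  have hwEpos : ∀ t, 0 < wE t := by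
    intro t; simp only [hwEdef]; split <;> positivity
  have hwET : wE T = β ^ (T - 2) * δ1 := by simp [hwEdef]
  have hwEne : ∀ t, t ≠ T → wE t = β ^ (t - 1) := by
    intro t h; simp [hwEdef, h]
  have hobj : ∀ v : ℕ → ℝ, ∑ t ∈ Finset.Icc 1 T, wE t * v t
      = (∑ t ∈ Finset.Icc 1 (T - 1), β ^ (t - 1) * v t) + β ^ (T - 2) * δ1 * v T := by
    intro v
    have hT1 : T - 1 + 1 = T := by omega
    have h := Finset.sum_Icc_succ_top (by omega : 1 ≤ T - 1 + 1) (fun t => wE t * v t)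
    rw [hT1] at h
    rw [h]
    congr 1
    · apply Finset.sum_congr rfl
      intro t ht
      have h2 := (Finset.mem_Icc.mp ht).2
      have hne : t ≠ T := by omega
      rw [hwEne t hne]
    · rw [hwET]
  have hEmax' : ∀ u : ℕ → ℝ, (∀ t ∈ Finset.Icc 1 T, 0 ≤ u t) →
      (∑ t ∈ Finset.Icc 1 T, φ (u t) / R ^ (t - 1) ≤ I) →
      ∑ t ∈ Finset.Icc 1 T, wE t * u t ≤ ∑ t ∈ Finset.Icc 1 T, wE t * vE t := by
    intro u h1 h2
    rw [hobj u, hobj vE]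
    exact hEmax u h1 h2
  have ratio_weak : ∀ p q : ℕ, 1 ≤ p → p < q → q ≤ T →
      wE p * δ1 ^ (q - 1) ≤ wE q * δ1 ^ (p - 1) := by
    intro p q hp hpq hq
    have hpT : p ≠ T := by omega
    rcases eq_or_ne q T with rfl|hqT
    · rw [hwEne p hpT, hwET]
      obtain ⟨k, hk⟩ : ∃ k, k = q - 1 - p := ⟨_, rfl⟩
      have ed : δ1 ^ (q - 1) = δ1 ^ (p - 1) * δ1 ^ k * δ1 := by
        rw [show q - 1 = p - 1 + k + 1 by omega, pow_add, pow_add, pow_one]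
      have eb : β ^ (q - 2) = β ^ (p - 1) * β ^ k := by
        rw [show q - 2 = p - 1 + k by omega, pow_add]
      rw [ed, eb]
      have hk' : δ1 ^ k ≤ β ^ k := pow_le_pow_left₀ hδ1.le hβδ.le _
      have := mul_le_mul_of_nonneg_left hk'
        (by positivity : (0:ℝ) ≤ β ^ (p - 1) * δ1 ^ (p - 1) * δ1)
      linarith [this]
    · rw [hwEne p hpT, hwEne q hqT]
      have ed : δ1 ^ (q - 1) = δ1 ^ (p - 1) * δ1 ^ (q - p) := by
        rw [show q - 1 = p - 1 + (q - p) by omega, pow_add]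
      have eb : β ^ (q - 1) = β ^ (p - 1) * β ^ (q - p) := by
        rw [show q - 1 = p - 1 + (q - p) by omega, pow_add]
      rw [ed, eb]
      have hk' : δ1 ^ (q - p) ≤ β ^ (q - p) := pow_le_pow_left₀ hδ1.le hβδ.le _
      have := mul_le_mul_of_nonneg_left hk'
        (by positivity : (0:ℝ) ≤ β ^ (p - 1) * δ1 ^ (p - 1))
      linarith [this]
  have ratio_strict : ∀ p q : ℕ, 1 ≤ p → p < q → q ≤ T → p ≤ T - 2 →
      wE p * δ1 ^ (q - 1) < wE q * δ1 ^ (p - 1) := by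
    intro p q hp hpq hq hp2
    have hpT : p ≠ T := by omega
    rcases eq_or_ne q T with rfl|hqT
    · rw [hwEne p hpT, hwET]
      obtain ⟨k, hk⟩ : ∃ k, k = q - 1 - p := ⟨_, rfl⟩
      have ed : δ1 ^ (q - 1) = δ1 ^ (p - 1) * δ1 ^ k * δ1 := by
        rw [show q - 1 = p - 1 + k + 1 by omega, pow_add, pow_add, pow_one]
      have eb : β ^ (q - 2) = β ^ (p - 1) * β ^ k := by
        rw [show q - 2 = p - 1 + k by omega, pow_add]
      rw [ed, eb]
      have hk' : δ1 ^ k < β ^ k := pow_lt_pow_left₀ hβδ hδ1.le (by omega)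
      have := mul_lt_mul_of_pos_left hk'
        (by positivity : (0:ℝ) < β ^ (p - 1) * δ1 ^ (p - 1) * δ1)
      linarith [this]
    · rw [hwEne p hpT, hwEne q hqT]
      have ed : δ1 ^ (q - 1) = δ1 ^ (p - 1) * δ1 ^ (q - p) := by
        rw [show q - 1 = p - 1 + (q - p) by omega, pow_add]
      have eb : β ^ (q - 1) = β ^ (p - 1) * β ^ (q - p) := by
        rw [show q - 1 = p - 1 + (q - p) by omega, pow_add]
      rw [ed, eb]
      have hk' : δ1 ^ (q - p) < β ^ (q - p) :=
        pow_lt_pow_left₀ hβδ hδ1.le (by omega)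
      have := mul_lt_mul_of_pos_left hk'
        (by positivity : (0:ℝ) < β ^ (p - 1) * δ1 ^ (p - 1))
      linarith [this]
  have CrossW : ∀ p q : ℕ, p ∈ Finset.Icc 1 T → q ∈ Finset.Icc 1 T → p < q →
      vB p ≤ vE p → 0 < vE p → vE q < vB q → False := by
    intro p q hp hq hpq h1 h2 h3
    obtain ⟨hp1, hpT⟩ := Finset.mem_Icc.mp hp
    obtain ⟨hq1, hqT⟩ := Finset.mem_Icc.mp hq
    exact Stmt0Aux5.UDL φ hφc hφm hφconv hφ0 hdiff (R ^ (p - 1)) (R ^ (q - 1))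
      (by positivity) (by positivity)
      (wE p) (wE q) (δ1 ^ (p - 1)) (δ1 ^ (q - 1))
      (hwEpos p) (hwEpos q) (pow_pos hδ1 _) (pow_pos hδ1 _)
      (vB p) (vE p) (vE q) (vB q)
      (hBnonneg p hp) h1 h2 (hEnonneg q hq) h3.le
      (lt_of_le_of_lt (hEnonneg q hq) h3)
      (ratio_weak p q hp1 hpq hqT) (Or.inr h3)
      (Stmt0Aux4.pairwise_opt T R I φ wE vE hEnonneg hEbudget hEmax' hp hq (by omega))
      (Stmt0Aux4.pairwise_opt T R I φ (fun t => δ1 ^ (t - 1)) vB hBnonneg hBbudget hBmax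
        hp hq (by omega))
  have CrossS : ∀ p q : ℕ, p ∈ Finset.Icc 1 T → q ∈ Finset.Icc 1 T → p < q → p ≤ T - 2 →
      vB p ≤ vE p → 0 < vE p → vB q = vE q → 0 < vE q → False := by
    intro p q hp hq hpq hp2 h1 h2 heq h3
    obtain ⟨hp1, hpT⟩ := Finset.mem_Icc.mp hp
    obtain ⟨hq1, hqT⟩ := Finset.mem_Icc.mp hq
    exact Stmt0Aux5.UDL φ hφc hφm hφconv hφ0 hdiff (R ^ (p - 1)) (R ^ (q - 1))
      (by positivity) (by positivity)
      (wE p) (wE q) (δ1 ^ (p - 1)) (δ1 ^ (q - 1))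
      (hwEpos p) (hwEpos q) (pow_pos hδ1 _) (pow_pos hδ1 _)
      (vB p) (vE p) (vE q) (vB q)
      (hBnonneg p hp) h1 h2 (hEnonneg q hq) (le_of_eq heq.symm)
      (by rw [heq]; exact h3)
      (ratio_weak p q hp1 hpq hqT) (Or.inl (ratio_strict p q hp1 hpq hqT hp2))
      (Stmt0Aux4.pairwise_opt T R I φ wE vE hEnonneg hEbudget hEmax' hp hq (by omega))
      (Stmt0Aux4.pairwise_opt T R I φ (fun t => δ1 ^ (t - 1)) vB hBnonneg hBbudget hBmax
        hp hq (by omega))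
  have h1T : (1:ℕ) ∈ Finset.Icc 1 T := Finset.mem_Icc.mpr ⟨le_rfl, by omega⟩
  have hnoslack : ¬ (∑ t ∈ Finset.Icc 1 T, φ (vE t) / R ^ (t - 1) < I) := by
    intro hlt
    set S := ∑ t ∈ Finset.Icc 1 T, φ (vE t) / R ^ (t - 1) with hS
    have hcw : ContinuousWithinAt φ (Set.Ici 0) (vE 1) :=
      hφc.continuousWithinAt (hEnonneg 1 h1T)
    have hset : {z : ℝ | z < φ (vE 1) + (I - S)} ∈ nhds (φ (vE 1)) :=
      Iio_mem_nhds (by linarith)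
    have hev := hcw hset
    rw [Filter.mem_map, Metric.mem_nhdsWithin_iff] at hev
    obtain ⟨δ, hδ0, hball⟩ := hev
    obtain ⟨u1, hu1⟩ : ∃ u1 : ℝ, u1 = vE 1 + δ/2 := ⟨_, rfl⟩
    have hu1mem : u1 ∈ Metric.ball (vE 1) δ ∩ Set.Ici 0 := by
      constructor
      · rw [Metric.mem_ball, Real.dist_eq]
        rw [show u1 - vE 1 = δ/2 by rw [hu1]; ring, abs_of_nonneg (by linarith)]
        linarith
      · have := hEnonneg 1 h1T
        simp only [Set.mem_Ici, hu1]; linarith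
    have hφu1 : φ u1 < φ (vE 1) + (I - S) := hball hu1mem
    set u := Function.update vE 1 u1 with hud
    have hun : ∀ t ∈ Finset.Icc 1 T, 0 ≤ u t := by
      intro t ht; rcases eq_or_ne t 1 with rfl|h
      · simp only [hud, Function.update_self]
        rw [hu1]
        have := hEnonneg 1 h1T; linarith
      · simp only [hud, Function.update_of_ne h]; exact hEnonneg t ht
    have e1 : ∑ t ∈ Finset.Icc 1 T, φ (Function.update vE 1 u1 t) / R ^ (t - 1)
        = S - φ (vE 1) / R ^ (1 - 1) + φ u1 / R ^ (1 - 1) :=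
      Stmt0Aux4.sum_update_eq (Finset.Icc 1 T) (fun t z => φ z / R ^ (t - 1)) vE h1T u1
    have e2 : ∑ t ∈ Finset.Icc 1 T, wE t * Function.update vE 1 u1 t
        = ∑ t ∈ Finset.Icc 1 T, wE t * vE t - wE 1 * vE 1 + wE 1 * u1 :=
      Stmt0Aux4.sum_update_eq (Finset.Icc 1 T) (fun t z => wE t * z) vE h1T u1
    have hpow : R ^ (1 - 1 : ℕ) = 1 := by norm_num
    have hub : ∑ t ∈ Finset.Icc 1 T, φ (u t) / R ^ (t - 1) ≤ I := by
      rw [hud, e1, hpow]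
      simp only [div_one]
      linarith
    have hle := hEmax' u hun hub
    rw [hud, e2] at hle
    have hwE1 : 0 < wE 1 := hwEpos 1
    have hd : wE 1 * u1 = wE 1 * vE 1 + wE 1 * (δ/2) := by rw [hu1]; ring
    rw [hd] at hle
    linarith [mul_pos hwE1 (show (0:ℝ) < δ/2 by linarith)]
  refine ⟨?_, ?_, ?_⟩
  · -- (i)
    by_contra hcon
    push_neg at hcon
    have hall : ∀ s ∈ Finset.Icc 1 T, δ1 ^ (s - 1) * vB s ≤ δ1 ^ (s - 1) * vE s := by
      intro s hs
      have hbe : vB s ≤ vE s := by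
        rcases eq_or_ne s 1 with rfl|hne
        · exact hcon.le
        · have hs1 : 1 < s := by
            have := (Finset.mem_Icc.mp hs).1; omega
          by_contra hc2; push_neg at hc2
          exact CrossW 1 s h1T hs hs1 hcon.le
            (lt_of_le_of_lt (hBnonneg 1 h1T) hcon) hc2
      exact mul_le_mul_of_nonneg_left hbe (by positivity)
    have hstr : ∑ t ∈ Finset.Icc 1 T, δ1 ^ (t - 1) * vB t
        < ∑ t ∈ Finset.Icc 1 T, δ1 ^ (t - 1) * vE t :=
      Finset.sum_lt_sum hall ⟨1, h1T, mul_lt_mul_of_pos_left hcon (by positivity)⟩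
    exact absurd (hBmax vE hEnonneg hEbudget) (not_le.mpr hstr)
  · -- (ii)
    intro t ht h1 h2
    have weak : ∀ s ∈ Finset.Icc 1 T, t < s → vB s ≤ vE s := by
      intro s hs hts
      by_contra hcon; push_neg at hcon
      exact CrossW t s ht hs hts h1 h2 hcon
    refine ⟨weak, ?_⟩
    intro htT s hs hts h3
    rcases lt_or_eq_of_le (weak s hs hts) with h|h
    · exact h
    · exact (CrossS t s ht hs hts htT h1 h2 h h3).elim
  · -- (iii)
    intro t ht h1
    by_cases hex : ∃ t' ∈ Finset.Icc 1 T, t < t' ∧ vB t' < vE t'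
    · obtain ⟨t', ht', htt', hst⟩ := hex
      refine ⟨t', ht', htt', hst, ?_⟩
      intro s hs hts
      rcases eq_or_lt_of_le hts with rfl|h
      · exact hst.le
      · by_contra hcon; push_neg at hcon
        exact CrossW t' s ht' hs h hst.le
          (lt_of_le_of_lt (hBnonneg t' ht') hst) hcon
    · exfalso
      push_neg at hex
      have hall : ∀ s ∈ Finset.Icc 1 T,
          φ (vE s) / R ^ (s - 1) ≤ φ (vB s) / R ^ (s - 1) := by
        intro s hs
        have hses : vE s ≤ vB s := by
          rcases lt_trichotomy s t with h|h|h
          · by_contra hcon; push_neg at hcon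
            exact CrossW s t hs ht h hcon.le
              (lt_of_le_of_lt (hBnonneg s hs) hcon) h1
          · rw [h]; exact h1.le
          · exact hex s hs h
        have hφs : φ (vE s) ≤ φ (vB s) :=
          Stmt0Aux.phile hφm (hEnonneg s hs) hses
        have hc : (0:ℝ) < R ^ (s - 1) := by positivity
        have := mul_le_mul_of_nonneg_right hφs (le_of_lt (inv_pos.mpr hc))
        simpa [div_eq_mul_inv] using this
      have hstrs : ∑ s ∈ Finset.Icc 1 T, φ (vE s) / R ^ (s - 1)
          < ∑ s ∈ Finset.Icc 1 T, φ (vB s) / R ^ (s - 1) := by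
        refine Finset.sum_lt_sum hall ⟨t, ht, ?_⟩
        have hφs : φ (vE t) < φ (vB t) := hφm (hEnonneg t ht) (hBnonneg t ht) h1
        have hc : (0:ℝ) < R ^ (t - 1) := by positivity
        have := mul_lt_mul_of_pos_right hφs (inv_pos.mpr hc)
        simpa [div_eq_mul_inv] using this
      exact hnoslack (lt_of_lt_of_le hstrs hBbudget)
end

section
/- Corollary 1 (Crossing point). Suppose in addition that v^{B,T}_t > 0 for every t ∈ {1,…,T}. Then there exists t* ∈ {2,…,T−1} such that v^{E,T}_t < v^{B,T}_t for all t < t* and v^{E,T}_t > v^{B,T}_t for all t > t*. -/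
open Finset Topology Filter Set

private lemma sum_update1 {T s : ℕ} (hs : s ∈ Finset.Icc 1 T) (F : ℕ → ℝ → ℝ) (v : ℕ → ℝ) (a : ℝ) :
    ∑ x ∈ Finset.Icc 1 T, F x (Function.update v s a x)
      = ∑ x ∈ Finset.Icc 1 T, F x (v x) + (F s a - F s (v s)) := by
  have h1 : ∑ x ∈ Finset.Icc 1 T, F x (Function.update v s a x)
      = ∑ x ∈ Finset.Icc 1 T, Function.update (fun x => F x (v x)) s (F s a) x :=
    Finset.sum_congr rfl (fun x _ => by
      by_cases h : x = s
      · subst h; simp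
      · simp [h, Function.update_of_ne h])
  rw [h1, Finset.sum_update_of_mem hs]
  have h2 : ∑ x ∈ Finset.Icc 1 T, F x (v x)
      = ∑ x ∈ Finset.Icc 1 T \ {s}, F x (v x) + F s (v s) :=
    (Finset.sum_eq_sum_sdiff_singleton_add hs _)
  rw [h2]; ring

/-- two-coordinate exchange: consequence of optimality -/
private lemma opt_pair {T : ℕ} {R I : ℝ} {φ : ℝ → ℝ} {w v : ℕ → ℝ}
    (hnn : ∀ x ∈ Finset.Icc 1 T, 0 ≤ v x)
    (hbudget : ∑ x ∈ Finset.Icc 1 T, φ (v x) / R ^ (x - 1) ≤ I)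
    (hmax : ∀ u : ℕ → ℝ, (∀ x ∈ Finset.Icc 1 T, 0 ≤ u x) →
      (∑ x ∈ Finset.Icc 1 T, φ (u x) / R ^ (x - 1) ≤ I) →
      ∑ x ∈ Finset.Icc 1 T, w x * u x ≤ ∑ x ∈ Finset.Icc 1 T, w x * v x)
    {s t : ℕ} (hs : s ∈ Finset.Icc 1 T) (ht : t ∈ Finset.Icc 1 T) (hst : s ≠ t)
    {a y : ℝ} (ha : 0 ≤ a) (hy : 0 ≤ y)
    (hfeas : φ a / R ^ (s - 1) + φ y / R ^ (t - 1)
      ≤ φ (v s) / R ^ (s - 1) + φ (v t) / R ^ (t - 1)) :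
    w s * a + w t * y ≤ w s * v s + w t * v t := by
  set u : ℕ → ℝ := Function.update (Function.update v s a) t y with hu
  have hunn : ∀ x ∈ Finset.Icc 1 T, 0 ≤ u x := by
    intro x hx
    by_cases h1 : x = t
    · subst h1; simp [hu, hy]
    · by_cases h2 : x = s
      · subst h2; simp [hu, Function.update_of_ne h1, ha]
      · simp [hu, Function.update_of_ne h1, Function.update_of_ne h2]; exact hnn x hx
  have hb1 : ∑ x ∈ Finset.Icc 1 T, φ (u x) / R ^ (x - 1)
      = ∑ x ∈ Finset.Icc 1 T, φ (v x) / R ^ (x - 1)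
        + (φ a / R ^ (s - 1) - φ (v s) / R ^ (s - 1))
        + (φ y / R ^ (t - 1) - φ (v t) / R ^ (t - 1)) := by
    rw [hu]
    rw [sum_update1 ht (fun x z => φ z / R ^ (x - 1)) _ y]
    rw [sum_update1 hs (fun x z => φ z / R ^ (x - 1)) _ a]
    rw [Function.update_of_ne (Ne.symm hst)]
  have hub : ∑ x ∈ Finset.Icc 1 T, φ (u x) / R ^ (x - 1) ≤ I := by
    rw [hb1]; linarith
  have hobj := hmax u hunn hub
  have ho1 : ∑ x ∈ Finset.Icc 1 T, w x * u x
      = ∑ x ∈ Finset.Icc 1 T, w x * v x + (w s * a - w s * v s) + (w t * y - w t * v t) := by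
    rw [hu]
    rw [sum_update1 ht (fun x z => w x * z) _ y]
    rw [sum_update1 hs (fun x z => w x * z) _ a]
    rw [Function.update_of_ne (Ne.symm hst)]
  rw [ho1] at hobj
  linarith

/-- the budget constraint binds at an optimum -/
private lemma budget_binds {T : ℕ} {R I : ℝ} {φ : ℝ → ℝ} {w v : ℕ → ℝ}
    (hT : 1 ≤ T)
    (hφc : ContinuousOn φ (Set.Ici 0))
    (hw1 : 0 < w 1)
    (hnn : ∀ x ∈ Finset.Icc 1 T, 0 ≤ v x)
    (hbudget : ∑ x ∈ Finset.Icc 1 T, φ (v x) / R ^ (x - 1) ≤ I)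
    (hmax : ∀ u : ℕ → ℝ, (∀ x ∈ Finset.Icc 1 T, 0 ≤ u x) →
      (∑ x ∈ Finset.Icc 1 T, φ (u x) / R ^ (x - 1) ≤ I) →
      ∑ x ∈ Finset.Icc 1 T, w x * u x ≤ ∑ x ∈ Finset.Icc 1 T, w x * v x) :
    ∑ x ∈ Finset.Icc 1 T, φ (v x) / R ^ (x - 1) = I := by
  rcases lt_or_eq_of_le hbudget with hlt | heq
  · exfalso
    obtain ⟨B, hB⟩ : ∃ B, B = ∑ x ∈ Finset.Icc 1 T, φ (v x) / R ^ (x - 1) := ⟨_, rfl⟩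
    set σ := I - B with hσ
    have hσpos : 0 < σ := by rw [hσ, hB]; linarith
    have h1mem : (1 : ℕ) ∈ Finset.Icc 1 T := by simp [Finset.mem_Icc]; omega
    have hv1 : 0 ≤ v 1 := hnn 1 h1mem
    have hcont : ContinuousWithinAt φ (Set.Ici 0) (v 1) := hφc _ hv1
    have hmono : 𝓝[>] (v 1) ≤ 𝓝[Set.Ici (0:ℝ)] (v 1) :=
      nhdsWithin_mono _ (fun x hx => le_trans hv1 (le_of_lt hx))
    have hev : ∀ᶠ x in 𝓝[>] (v 1), φ x < φ (v 1) + σ :=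
      (hcont.tendsto.mono_left hmono).eventually_lt_const (by linarith)
    obtain ⟨x, hx1, hx2⟩ := (hev.and self_mem_nhdsWithin).exists
    set u := Function.update v 1 x with hu
    have hunn : ∀ z ∈ Finset.Icc 1 T, 0 ≤ u z := by
      intro z hz
      by_cases h : z = 1
      · subst h; simp [hu]; linarith [hx2.le]
      · simp [hu, Function.update_of_ne h]; exact hnn z hz
    have hub : ∑ z ∈ Finset.Icc 1 T, φ (u z) / R ^ (z - 1) ≤ I := by
      rw [hu, sum_update1 h1mem (fun z r => φ r / R ^ (z - 1)) _ x]
      simp only [Nat.sub_self, pow_zero, div_one]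
      rw [← hB]
      linarith
    have hobj := hmax u hunn hub
    rw [hu, sum_update1 h1mem (fun z r => w z * r) _ x] at hobj
    have : x ≤ v 1 := by nlinarith [hw1]
    exact absurd hx2 (not_lt.mpr this)
  · exact heq

set_option maxHeartbeats 1000000 in
/-- first-order condition, chord form: at an optimum, moving budget from a positive
coordinate `s` towards coordinate `t` does not pay. -/
private lemma foc_chord {T : ℕ} {R I : ℝ} {φ : ℝ → ℝ} {w v : ℕ → ℝ}
    (hR : 1 ≤ R)
    (hφm : StrictMonoOn φ (Set.Ici 0))
    (hφconv : StrictConvexOn ℝ (Set.Ici 0) φ)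
    (hφd : ∀ x : ℝ, 0 < x → DifferentiableAt ℝ φ x)
    (hwpos : ∀ x ∈ Finset.Icc 1 T, 0 < w x)
    (hnn : ∀ x ∈ Finset.Icc 1 T, 0 ≤ v x)
    (hbudget : ∑ x ∈ Finset.Icc 1 T, φ (v x) / R ^ (x - 1) ≤ I)
    (hmax : ∀ u : ℕ → ℝ, (∀ x ∈ Finset.Icc 1 T, 0 ≤ u x) →
      (∑ x ∈ Finset.Icc 1 T, φ (u x) / R ^ (x - 1) ≤ I) →
      ∑ x ∈ Finset.Icc 1 T, w x * u x ≤ ∑ x ∈ Finset.Icc 1 T, w x * v x)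
    {s t : ℕ} (hs : s ∈ Finset.Icc 1 T) (ht : t ∈ Finset.Icc 1 T) (hst : s ≠ t)
    (hvs : 0 < v s) {y : ℝ} (hy : v t < y) :
    w t * R ^ (t - 1) * deriv φ (v s) * (y - v t)
      ≤ w s * R ^ (s - 1) * (φ y - φ (v t)) := by
  have hR0 : (0:ℝ) < R := lt_of_lt_of_le one_pos hR
  have hRs : (0:ℝ) < R ^ (s - 1) := pow_pos hR0 _
  have hRt : (0:ℝ) < R ^ (t - 1) := pow_pos hR0 _
  have hws : 0 < w s := hwpos s hs
  have hwt : 0 < w t := hwpos t ht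
  set p := v s with hp
  set q := v t with hq
  have hq0 : 0 ≤ q := hnn t ht
  have hy0 : (0:ℝ) ≤ y := le_trans hq0 hy.le
  have hY : 0 < y - q := by linarith
  have hL : 0 < φ y - φ q := sub_pos.mpr (hφm hq0 hy0 hy)
  set d := deriv φ p with hd
  have hdiffp : DifferentiableAt ℝ φ p := hφd p hvs
  have hdpos : 0 < d := by
    have hhalf : (0:ℝ) ≤ p / 2 := by linarith
    have hslope : slope φ (p/2) p ≤ d :=
      hφconv.convexOn.slope_le_deriv (Set.mem_Ici.mpr hhalf) (Set.mem_Ici.mpr (by linarith))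
        (by linarith) hdiffp
    have : 0 < slope φ (p/2) p := by
      rw [slope_def_field]
      apply div_pos (sub_pos.mpr (hφm (Set.mem_Ici.mpr hhalf) (Set.mem_Ici.mpr (by linarith))
        (by linarith)))
      linarith
    linarith
  have key : ∀ c : ℝ, 0 < c → c * ((φ y - φ q) * R ^ (s-1)) < d * (y - q) * R ^ (t-1) →
      w t * c ≤ w s := by
    intro c hc0 hcc
    have hslopetendsto : Tendsto (fun ε : ℝ => (φ p - φ (p - ε)) / ε) (𝓝[>] 0) (𝓝 d) := by
      have h1 : Tendsto (slope φ p) (𝓝[≠] p) (𝓝 d) :=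
        hasDerivAt_iff_tendsto_slope.mp hdiffp.hasDerivAt
      have h2 : Tendsto (fun ε : ℝ => p - ε) (𝓝[>] 0) (𝓝[≠] p) := by
        apply tendsto_nhdsWithin_of_tendsto_nhds_of_eventually_within
        · have h0 : Tendsto (fun ε : ℝ => p - ε) (𝓝 0) (𝓝 (p - 0)) :=
            (tendsto_const_nhds.sub tendsto_id)
          simpa using h0.mono_left nhdsWithin_le_nhds
        · filter_upwards [self_mem_nhdsWithin] with ε hε
          simp only [Set.mem_compl_iff, Set.mem_singleton_iff]
          intro h
          have : ε = 0 := by linarith [sub_eq_self.mp h]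
          exact absurd this (ne_of_gt hε)
      have h3 := h1.comp h2
      apply h3.congr'
      filter_upwards [self_mem_nhdsWithin] with ε hε
      have hεne : (ε:ℝ) ≠ 0 := ne_of_gt hε
      simp only [Function.comp_apply, slope_def_field]
      rw [show p - ε - p = -ε by ring]
      rw [div_neg_eq_neg_div, ← neg_div]
      congr 1; ring
    set K := c * (φ y - φ q) * R ^ (s-1) / ((y - q) * R ^ (t-1)) with hK
    have hKd : K < d := by
      rw [hK, div_lt_iff₀ (by positivity)]
      calc c * (φ y - φ q) * R ^ (s-1) = c * ((φ y - φ q) * R ^ (s-1)) := by ring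
      _ < d * (y - q) * R ^ (t-1) := hcc
      _ = d * ((y - q) * R ^ (t-1)) := by ring
    have hev1 : ∀ᶠ ε in 𝓝[>] (0:ℝ), K < (φ p - φ (p - ε)) / ε :=
      hslopetendsto.eventually_const_lt hKd
    have hev2 : ∀ᶠ ε in 𝓝[>] (0:ℝ), ε < min p ((y - q)/c) :=
      Filter.eventually_of_mem (nhdsWithin_le_nhds (Iio_mem_nhds (by positivity)))
        (fun ε hε => hε)
    have hev3 : ∀ᶠ ε in 𝓝[>] (0:ℝ), (0:ℝ) < ε :=
      Filter.eventually_of_mem self_mem_nhdsWithin (fun ε hε => hε)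
    obtain ⟨ε, hεK, hεsm, hεpos⟩ := (hev1.and (hev2.and hev3)).exists
    have hεp : ε < p := lt_of_lt_of_le hεsm (min_le_left _ _)
    have hεY : c * ε < y - q := by
      have := lt_of_lt_of_le hεsm (min_le_right _ _)
      calc c * ε < c * ((y - q)/c) := by exact (mul_lt_mul_iff_right₀ hc0).mpr this
      _ = y - q := by field_simp
    have hslope_ineq : K * ε < φ p - φ (p - ε) := by
      have h4 := hεK
      rw [lt_div_iff₀ hεpos] at h4
      linarith
    have hchord : φ (q + c * ε) ≤ φ q + (c * ε / (y - q)) * (φ y - φ q) := by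
      have hlam0 : 0 ≤ c * ε / (y - q) := by positivity
      have hlam1 : c * ε / (y - q) ≤ 1 := by
        rw [div_le_one hY]; linarith
      have hcomb := hφconv.convexOn.2 (Set.mem_Ici.mpr hq0) (Set.mem_Ici.mpr hy0)
        (by linarith : 0 ≤ 1 - c * ε / (y - q)) hlam0 (by ring)
      have harg : (1 - c * ε / (y - q)) • q + (c * ε / (y - q)) • y = q + c * ε := by
        have h5 : (c * ε / (y - q)) * (y - q) = c * ε := by field_simp
        simp only [smul_eq_mul]; nlinarith [h5]
      rw [harg] at hcomb
      have h6 : (1 - c * ε / (y - q)) * φ q + (c * ε / (y - q)) * φ y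
          = φ q + (c * ε / (y - q)) * (φ y - φ q) := by ring
      simpa [smul_eq_mul, h6] using hcomb
    have hfeas : φ (p - ε) / R ^ (s - 1) + φ (q + c * ε) / R ^ (t - 1)
        ≤ φ (v s) / R ^ (s - 1) + φ (v t) / R ^ (t - 1) := by
      rw [← hp, ← hq]
      have hKε : K * ε = c * ε * (φ y - φ q) * R ^ (s-1) / ((y - q) * R ^ (t-1)) := by
        rw [hK]; field_simp
      have h2 : φ (q + c * ε) - φ q ≤ (c * ε / (y - q)) * (φ y - φ q) := by linarith
      have h3 : (φ (q + c * ε) - φ q) / R ^ (t - 1) ≤ (φ p - φ (p - ε)) / R ^ (s - 1) := by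
        have hA : (φ (q + c * ε) - φ q) / R ^ (t - 1)
            ≤ (c * ε / (y - q)) * (φ y - φ q) / R ^ (t - 1) :=
          (div_le_div_iff_of_pos_right hRt).mpr h2
        have hB : (c * ε / (y - q)) * (φ y - φ q) / R ^ (t - 1)
            = K * ε / R ^ (s - 1) := by
          rw [hKε]; field_simp
        have hC : K * ε / R ^ (s - 1) ≤ (φ p - φ (p - ε)) / R ^ (s - 1) :=
          (div_le_div_iff_of_pos_right hRs).mpr hslope_ineq.le
        calc (φ (q + c * ε) - φ q) / R ^ (t - 1) ≤ _ := hA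
        _ = _ := hB
        _ ≤ _ := hC
      have e1 : φ (p - ε) / R ^ (s-1) = φ p / R ^ (s-1) - (φ p - φ (p-ε)) / R ^ (s-1) := by
        field_simp
        ring
      have e2 : φ (q + c*ε) / R ^ (t-1) = φ q / R ^ (t-1) + (φ (q + c*ε) - φ q) / R ^ (t-1) := by
        field_simp
        ring
      rw [e1, e2]
      linarith
    have hopt := opt_pair hnn hbudget hmax hs ht hst
      (by linarith : (0:ℝ) ≤ p - ε) (by positivity : (0:ℝ) ≤ q + c * ε) hfeas
    rw [← hp, ← hq] at hopt
    ring_nf at hopt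
    have h5 : (w t * c) * ε ≤ w s * ε := by nlinarith [hopt]
    exact le_of_mul_le_mul_right h5 hεpos
  by_contra hcon
  push_neg at hcon
  set cstar := d * (y - q) * R ^ (t-1) / ((φ y - φ q) * R ^ (s-1)) with hcs
  have hcspos : 0 < cstar := by rw [hcs]; positivity
  have hwscs : w s / w t < cstar := by
    rw [hcs, div_lt_div_iff₀ hwt (by positivity)]
    nlinarith [hcon]
  set c := (w s / w t + cstar) / 2 with hc
  have hc0 : 0 < c := by
    have : 0 < w s / w t := div_pos hws hwt
    rw [hc]; linarith
  have hclt : c < cstar := by rw [hc]; linarith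
  have hcgt : w s / w t < c := by rw [hc]; linarith
  have hkey := key c hc0 (by
    rw [hcs] at hclt
    rw [lt_div_iff₀ (by positivity)] at hclt
    nlinarith [hclt])
  have : w s < c * w t := (div_lt_iff₀ hwt).mp hcgt
  nlinarith [hkey, this]

set_option maxHeartbeats 1000000 in
/-- first-order condition, derivative form. -/
private lemma foc_deriv {T : ℕ} {R I : ℝ} {φ : ℝ → ℝ} {w v : ℕ → ℝ}
    (hR : 1 ≤ R)
    (hφm : StrictMonoOn φ (Set.Ici 0))
    (hφconv : StrictConvexOn ℝ (Set.Ici 0) φ)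
    (hφd : ∀ x : ℝ, 0 < x → DifferentiableAt ℝ φ x)
    (hwpos : ∀ x ∈ Finset.Icc 1 T, 0 < w x)
    (hnn : ∀ x ∈ Finset.Icc 1 T, 0 ≤ v x)
    (hbudget : ∑ x ∈ Finset.Icc 1 T, φ (v x) / R ^ (x - 1) ≤ I)
    (hmax : ∀ u : ℕ → ℝ, (∀ x ∈ Finset.Icc 1 T, 0 ≤ u x) →
      (∑ x ∈ Finset.Icc 1 T, φ (u x) / R ^ (x - 1) ≤ I) →
      ∑ x ∈ Finset.Icc 1 T, w x * u x ≤ ∑ x ∈ Finset.Icc 1 T, w x * v x)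
    {s t : ℕ} (hs : s ∈ Finset.Icc 1 T) (ht : t ∈ Finset.Icc 1 T) (hst : s ≠ t)
    (hvs : 0 < v s) (hvt : 0 < v t) :
    w t * R ^ (t - 1) * deriv φ (v s) ≤ w s * R ^ (s - 1) * deriv φ (v t) := by
  have hdq : Tendsto (slope φ (v t)) (𝓝[>] (v t)) (𝓝 (deriv φ (v t))) :=
    (hasDerivAt_iff_tendsto_slope.mp (hφd _ hvt).hasDerivAt).mono_left
      (nhdsWithin_mono _ (fun y hy => ne_of_gt hy))
  have htends : Tendsto (fun y => w s * R ^ (s - 1) * slope φ (v t) y) (𝓝[>] (v t))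
      (𝓝 (w s * R ^ (s - 1) * deriv φ (v t))) := hdq.const_mul _
  apply ge_of_tendsto htends
  filter_upwards [self_mem_nhdsWithin] with y hy
  have hy' : v t < y := hy
  have hchord := foc_chord hR hφm hφconv hφd hwpos hnn hbudget hmax hs ht hst hvs hy'
  have hY : 0 < y - v t := by linarith
  rw [slope_def_field, mul_div_assoc', le_div_iff₀ hY]
  linarith [hchord]

private lemma combine_ineq {wEs wEt wBs wBt P Q : ℝ} (hwBs : 0 < wBs) (hP : 0 < P)
    (hEQ : wBt * P = wBs * Q) (hE : wEt * P ≤ wEs * Q) (hr : wEs * wBt ≤ wEt * wBs)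
    (hstrict : wEt * P < wEs * Q ∨ wEs * wBt < wEt * wBs) : False := by
  have h2 : wEs * (wBt * P) = wEs * (wBs * Q) := by rw [hEQ]
  rcases hstrict with h | h
  · nlinarith [mul_lt_mul_of_pos_right h hwBs, mul_le_mul_of_nonneg_right hr hP.le, h2]
  · nlinarith [mul_le_mul_of_nonneg_right hE hwBs.le, mul_lt_mul_of_pos_right h hP, h2]


set_option maxHeartbeats 2000000 in
/-- Corollary 1 (crossing point).  With `vE` the (unique) maximizer of
Problem E(T) and `vB` the (unique) maximizer of Problem B(T) as in Proposition 2, if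
additionally `vB t > 0` for every `t ∈ {1,…,T}`, then there is `t* ∈ {2,…,T-1}` such
that `vE t < vB t` for all `t < t*` and `vE t > vB t` for all `t > t*` (with
`t ∈ {1,…,T}`). -/
theorem stmt1
    (T : ℕ) (hT : 3 ≤ T)
    (R I : ℝ) (hR : 1 ≤ R) (hI : 0 < I)
    (φ : ℝ → ℝ)
    (hφc : ContinuousOn φ (Set.Ici 0))
    (hφm : StrictMonoOn φ (Set.Ici 0))
    (hφconv : StrictConvexOn ℝ (Set.Ici 0) φ)
    (hφd : ContDiffOn ℝ 2 φ (Set.Ioi 0))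
    (hφ0 : φ 0 = 0)
    (hφtend : Filter.Tendsto (deriv φ) Filter.atTop Filter.atTop)
    (δ1 δ2 q1 q2 β : ℝ) (hδ1 : 0 < δ1) (hδ12 : δ1 < δ2)
    (hq1 : 0 < q1) (hq2 : 0 < q2) (hqsum : q1 + q2 = 1)
    (hβ : β = q1 * δ1 + q2 * δ2)
    (vB vE : ℕ → ℝ)
    -- vB solves Problem B(T)
    (hBnonneg : ∀ t ∈ Finset.Icc 1 T, 0 ≤ vB t)
    (hBbudget : ∑ t ∈ Finset.Icc 1 T, φ (vB t) / R ^ (t - 1) ≤ I)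
    (hBmax : ∀ v : ℕ → ℝ, (∀ t ∈ Finset.Icc 1 T, 0 ≤ v t) →
      (∑ t ∈ Finset.Icc 1 T, φ (v t) / R ^ (t - 1) ≤ I) →
      ∑ t ∈ Finset.Icc 1 T, δ1 ^ (t - 1) * v t ≤ ∑ t ∈ Finset.Icc 1 T, δ1 ^ (t - 1) * vB t)
    -- vE solves Problem E(T)
    (hEnonneg : ∀ t ∈ Finset.Icc 1 T, 0 ≤ vE t)
    (hEbudget : ∑ t ∈ Finset.Icc 1 T, φ (vE t) / R ^ (t - 1) ≤ I)
    (hEmax : ∀ v : ℕ → ℝ, (∀ t ∈ Finset.Icc 1 T, 0 ≤ v t) →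
      (∑ t ∈ Finset.Icc 1 T, φ (v t) / R ^ (t - 1) ≤ I) →
      (∑ t ∈ Finset.Icc 1 (T - 1), β ^ (t - 1) * v t) + β ^ (T - 2) * δ1 * v T ≤
        (∑ t ∈ Finset.Icc 1 (T - 1), β ^ (t - 1) * vE t) + β ^ (T - 2) * δ1 * vE T)
    -- additional positivity hypothesis
    (hBpos : ∀ t ∈ Finset.Icc 1 T, 0 < vB t) :
    ∃ tstar ∈ Finset.Icc 2 (T - 1),
      (∀ t ∈ Finset.Icc 1 T, t < tstar → vE t < vB t) ∧
      (∀ t ∈ Finset.Icc 1 T, tstar < t → vB t < vE t) := by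
  classical
  have hβpos : 0 < β := by nlinarith
  have hβδ : δ1 < β := by nlinarith
  have hR0 : (0:ℝ) < R := lt_of_lt_of_le one_pos hR
  have hφd' : ∀ x : ℝ, 0 < x → DifferentiableAt ℝ φ x := fun x hx =>
    ((hφd.differentiableOn two_ne_zero).differentiableAt (Ioi_mem_nhds hx))
  set wB : ℕ → ℝ := fun x => δ1 ^ (x - 1) with hwB
  set wE : ℕ → ℝ := fun x => if x = T then β ^ (T-2) * δ1 else β ^ (x-1) with hwE
  have hwBx : ∀ x, wB x = δ1 ^ (x - 1) := fun x => rfl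
  have hwEx : ∀ x, wE x = if x = T then β ^ (T-2) * δ1 else β ^ (x-1) := fun x => rfl
  have hwBpos : ∀ x ∈ Finset.Icc 1 T, 0 < wB x := fun x _ => pow_pos hδ1 _
  have hwEpos : ∀ x ∈ Finset.Icc 1 T, 0 < wE x := by
    intro x _
    rw [hwEx]
    split
    · positivity
    · positivity
  -- uniform form of the E-objective
  have hsplit : ∀ u : ℕ → ℝ, ∑ x ∈ Finset.Icc 1 T, wE x * u x
      = (∑ x ∈ Finset.Icc 1 (T-1), β ^ (x-1) * u x) + β ^ (T-2) * δ1 * u T := by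
    intro u
    have hTeq : T - 1 + 1 = T := by omega
    have h1 : ∑ x ∈ Finset.Icc 1 T, wE x * u x
        = ∑ x ∈ Finset.Icc 1 (T-1), wE x * u x + wE (T-1+1) * u (T-1+1) := by
      rw [← Finset.sum_Icc_succ_top (by omega : 1 ≤ T - 1 + 1)]
      rw [hTeq]
    rw [h1, hTeq]
    congr 1
    · apply Finset.sum_congr rfl
      intro x hx
      have hxT : x ≠ T := by
        have := (Finset.mem_Icc.mp hx).2
        omega
      rw [hwEx, if_neg hxT]
    · rw [hwEx, if_pos rfl]
  have hEmax' : ∀ u : ℕ → ℝ, (∀ x ∈ Finset.Icc 1 T, 0 ≤ u x) →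
      (∑ x ∈ Finset.Icc 1 T, φ (u x) / R ^ (x - 1) ≤ I) →
      ∑ x ∈ Finset.Icc 1 T, wE x * u x ≤ ∑ x ∈ Finset.Icc 1 T, wE x * vE x := by
    intro u h1 h2
    rw [hsplit u, hsplit vE]
    exact hEmax u h1 h2
  have hBmax' : ∀ u : ℕ → ℝ, (∀ x ∈ Finset.Icc 1 T, 0 ≤ u x) →
      (∑ x ∈ Finset.Icc 1 T, φ (u x) / R ^ (x - 1) ≤ I) →
      ∑ x ∈ Finset.Icc 1 T, wB x * u x ≤ ∑ x ∈ Finset.Icc 1 T, wB x * vB x := by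
    intro u h1 h2
    exact hBmax u h1 h2
  -- weight ratio comparisons
  have hratio_strict : ∀ s t : ℕ, 1 ≤ s → s < t → t ≤ T → ¬(s = T-1 ∧ t = T) →
      wE s * wB t < wE t * wB s := by
    intro s t h1 hst htT hns
    rw [hwEx, hwEx, hwBx, hwBx]
    have hsT : s ≠ T := by omega
    rw [if_neg hsT]
    by_cases ht' : t = T
    · rw [if_pos ht', ht']
      have hs2 : s ≤ T - 2 := by omega
      have e1 : T - 1 = (s-1) + ((T-1-s) + 1) := by omega
      have e2 : T - 2 = (s-1) + (T-1-s) := by omega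
      rw [e1, e2, pow_add, pow_add, pow_add, pow_one]
      have key0 : δ1^(T-1-s) < β^(T-1-s) :=
        pow_lt_pow_left₀ hβδ hδ1.le (by omega)
      have hc := mul_lt_mul_of_pos_left key0
        (by positivity : (0:ℝ) < β^(s-1) * δ1^(s-1) * δ1)
      nlinarith [hc]
    · rw [if_neg ht']
      have e1 : t - 1 = (s-1) + (t-s) := by omega
      rw [e1, pow_add, pow_add]
      have key0 : δ1^(t-s) < β^(t-s) := pow_lt_pow_left₀ hβδ hδ1.le (by omega)
      have hc := mul_lt_mul_of_pos_left key0
        (by positivity : (0:ℝ) < β^(s-1) * δ1^(s-1))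
      nlinarith [hc]
  have hratio : ∀ s t : ℕ, 1 ≤ s → s < t → t ≤ T → wE s * wB t ≤ wE t * wB s := by
    intro s t h1 hst htT
    by_cases hns : s = T - 1 ∧ t = T
    · obtain ⟨hs', ht'⟩ := hns
      rw [hwEx, hwEx, hwBx, hwBx, hs', ht']
      rw [if_neg (by omega : T - 1 ≠ T), if_pos rfl]
      have e1 : T - 1 - 1 = T - 2 := by omega
      have e2 : T - 1 = (T - 2) + 1 := by omega
      rw [e1, e2, pow_add, pow_one]
      ring_nf
      exact le_refl _
    · exact (hratio_strict s t h1 hst htT hns).le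
  -- budgets bind
  have hwE1 : 0 < wE 1 := by
    rw [hwEx, if_neg (by omega : (1:ℕ) ≠ T)]
    positivity
  have hEI : ∑ x ∈ Finset.Icc 1 T, φ (vE x) / R ^ (x-1) = I :=
    budget_binds (by omega) hφc hwE1 hEnonneg hEbudget hEmax'
  have hBI : ∑ x ∈ Finset.Icc 1 T, φ (vB x) / R ^ (x-1) = I :=
    budget_binds (by omega) hφc (by rw [hwBx]; positivity) hBnonneg hBbudget hBmax'
  -- positivity of the derivative
  have hder_pos : ∀ z : ℝ, 0 < z → 0 < deriv φ z := by
    intro z hz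
    have hhalf : (0:ℝ) ≤ z / 2 := by linarith
    have hslope : slope φ (z/2) z ≤ deriv φ z :=
      hφconv.convexOn.slope_le_deriv (Set.mem_Ici.mpr hhalf) (Set.mem_Ici.mpr (by linarith))
        (by linarith) (hφd' z hz)
    have h0 : 0 < slope φ (z/2) z := by
      rw [slope_def_field]
      exact div_pos (sub_pos.mpr (hφm (Set.mem_Ici.mpr hhalf) (Set.mem_Ici.mpr (by linarith))
        (by linarith))) (by linarith)
    linarith
  -- strict monotonicity of the derivative
  have hdmono : StrictMonoOn (deriv φ) (Set.Ioi 0) :=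
    (hφconv.subset (Set.Ioi_subset_Ici le_rfl) (convex_Ioi 0)).strictMonoOn_deriv
      (fun x hx => hφd' x hx)
  -- the central single-crossing exclusion
  have key : ∀ s t : ℕ, s ∈ Finset.Icc 1 T → t ∈ Finset.Icc 1 T → s < t →
      (wE s * wB t < wE t * wB s ∨ vB s < vE s ∨ vE t < vB t) →
      vB s ≤ vE s → vE t ≤ vB t → False := by
    intro s t hs ht hst hdisj hles hlet
    have hvBs : 0 < vB s := hBpos s hs
    have hvBt : 0 < vB t := hBpos t ht
    have hvEs : 0 < vE s := lt_of_lt_of_le hvBs hles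
    have hne : s ≠ t := Nat.ne_of_lt hst
    have hRs : (0:ℝ) < R ^ (s-1) := pow_pos hR0 _
    have hRt : (0:ℝ) < R ^ (t-1) := pow_pos hR0 _
    have hwEt : 0 < wE t := hwEpos t ht
    have hwEs : 0 < wE s := hwEpos s hs
    have hB1 := foc_deriv hR hφm hφconv hφd' hwBpos hBnonneg hBbudget hBmax' hs ht hne hvBs hvBt
    have hB2 := foc_deriv hR hφm hφconv hφd' hwBpos hBnonneg hBbudget hBmax' ht hs
      (Ne.symm hne) hvBt hvBs
    have hEQ : wB t * (R ^ (t-1) * deriv φ (vB s)) = wB s * (R ^ (s-1) * deriv φ (vB t)) := by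
      rw [← mul_assoc, ← mul_assoc]
      exact le_antisymm hB1 hB2
    have hPpos : 0 < R ^ (t-1) * deriv φ (vB s) := mul_pos hRt (hder_pos _ hvBs)
    have hr := hratio s t (Finset.mem_Icc.mp hs).1 hst (Finset.mem_Icc.mp ht).2
    have hdmle : deriv φ (vB s) ≤ deriv φ (vE s) := by
      rcases eq_or_lt_of_le hles with h | h
      · rw [h]
      · exact (hdmono hvBs hvEs h).le
    rcases lt_or_eq_of_le hlet with hltt | heqt
    · -- vE t < vB t : chord argument with strict convexity at t
      have hch := foc_chord hR hφm hφconv hφd' hwEpos hEnonneg hEbudget hEmax' hs ht hne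
        hvEs hltt
      have hd : 0 < vB t - vE t := by linarith
      have hsc : φ (vB t) - φ (vE t) < deriv φ (vB t) * (vB t - vE t) := by
        have h0 := hφconv.slope_lt_deriv (Set.mem_Ici.mpr (hEnonneg t ht))
          (Set.mem_Ici.mpr hvBt.le) hltt (hφd' _ hvBt)
        rw [slope_def_field] at h0
        calc φ (vB t) - φ (vE t)
            = ((φ (vB t) - φ (vE t)) / (vB t - vE t)) * (vB t - vE t) := by field_simp
        _ < deriv φ (vB t) * (vB t - vE t) := mul_lt_mul_of_pos_right h0 hd
      have hstep : wE t * R^(t-1) * deriv φ (vB s) * (vB t - vE t)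
          < wE s * R^(s-1) * deriv φ (vB t) * (vB t - vE t) := by
        nlinarith [hch, mul_lt_mul_of_pos_left hsc (mul_pos hwEs hRs),
          mul_le_mul_of_nonneg_right
            (mul_le_mul_of_nonneg_left hdmle (mul_pos hwEt hRt).le) hd.le]
      have hEstrict : wE t * (R^(t-1) * deriv φ (vB s)) < wE s * (R^(s-1) * deriv φ (vB t)) := by
        calc wE t * (R^(t-1) * deriv φ (vB s)) = wE t * R^(t-1) * deriv φ (vB s) := by ring
        _ < wE s * R^(s-1) * deriv φ (vB t) := (mul_lt_mul_iff_left₀ hd).mp hstep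
        _ = wE s * (R^(s-1) * deriv φ (vB t)) := by ring
      exact combine_ineq (hwBpos s hs) hPpos hEQ hEstrict.le hr (Or.inl hEstrict)
    · -- vE t = vB t
      have hvEt : 0 < vE t := by rw [heqt]; exact hvBt
      have hfE := foc_deriv hR hφm hφconv hφd' hwEpos hEnonneg hEbudget hEmax' hs ht hne
        hvEs hvEt
      rw [heqt] at hfE
      rcases lt_or_eq_of_le hles with hlts | heqs
      · have hdlt : deriv φ (vB s) < deriv φ (vE s) := hdmono hvBs hvEs hlts
        have hEstrict : wE t * (R^(t-1) * deriv φ (vB s))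
            < wE s * (R^(s-1) * deriv φ (vB t)) := by
          nlinarith [hfE, hdlt, mul_pos hwEt hRt]
        exact combine_ineq (hwBpos s hs) hPpos hEQ hEstrict.le hr (Or.inl hEstrict)
      · have hrs : wE s * wB t < wE t * wB s := by
          rcases hdisj with h | h | h
          · exact h
          · rw [heqs] at h; exact absurd h (lt_irrefl _)
          · rw [heqt] at h; exact absurd h (lt_irrefl _)
        have hEweak : wE t * (R^(t-1) * deriv φ (vB s))
            ≤ wE s * (R^(s-1) * deriv φ (vB t)) := by
          rw [← heqs] at hfE
          calc wE t * (R^(t-1) * deriv φ (vB s)) = wE t * R^(t-1) * deriv φ (vB s) := by ring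
          _ ≤ wE s * R^(s-1) * deriv φ (vB t) := hfE
          _ = wE s * (R^(s-1) * deriv φ (vB t)) := by ring
        exact combine_ineq (hwBpos s hs) hPpos hEQ hEweak hr (Or.inr hrs)
  -- strict comparison of budget sums
  have sumlt : ∀ u1 u2 : ℕ → ℝ, (∀ x ∈ Finset.Icc 1 T, 0 ≤ u1 x) →
      (∀ x ∈ Finset.Icc 1 T, u1 x ≤ u2 x) → ∀ x0, x0 ∈ Finset.Icc 1 T → u1 x0 < u2 x0 →
      ∑ x ∈ Finset.Icc 1 T, φ (u1 x) / R^(x-1) < ∑ x ∈ Finset.Icc 1 T, φ (u2 x) / R^(x-1) := by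
    intro u1 u2 h0 hle x0 hx0 hstrict
    apply Finset.sum_lt_sum
    · intro i hi
      apply (div_le_div_iff_of_pos_right (pow_pos hR0 _)).mpr
      rcases eq_or_lt_of_le (hle i hi) with h | h
      · rw [h]
      · exact (hφm (Set.mem_Ici.mpr (h0 i hi))
          (Set.mem_Ici.mpr (le_trans (h0 i hi) (hle i hi))) h).le
    · exact ⟨x0, hx0, (div_lt_div_iff_of_pos_right (pow_pos hR0 _)).mpr
        (hφm (Set.mem_Ici.mpr (h0 x0 hx0))
          (Set.mem_Ici.mpr (le_trans (h0 x0 hx0) hstrict.le)) hstrict)⟩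
  have hmem1 : (1:ℕ) ∈ Finset.Icc 1 T := Finset.mem_Icc.mpr ⟨by omega, by omega⟩
  have hmem2 : (2:ℕ) ∈ Finset.Icc 1 T := Finset.mem_Icc.mpr ⟨by omega, by omega⟩
  -- the set of coordinates where vE < vB
  set S := (Finset.Icc 1 T).filter (fun x => vE x < vB x) with hS
  have hSne : S.Nonempty := by
    by_contra hempty
    rw [Finset.not_nonempty_iff_eq_empty] at hempty
    have hall : ∀ x ∈ Finset.Icc 1 T, vB x ≤ vE x := by
      intro x hx
      by_contra hcx
      push_neg at hcx
      have : x ∈ S := by rw [hS]; exact Finset.mem_filter.mpr ⟨hx, hcx⟩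
      rw [hempty] at this
      exact absurd this (Finset.notMem_empty x)
    have h2 : vB 2 < vE 2 := by
      by_contra hc
      push_neg at hc
      exact key 1 2 hmem1 hmem2 (by omega)
        (Or.inl (hratio_strict 1 2 (by omega) (by omega) (by omega) (by omega)))
        (hall 1 hmem1) hc
    have := sumlt vB vE (fun x hx => (hBpos x hx).le) hall 2 hmem2 h2
    rw [hBI, hEI] at this
    exact lt_irrefl I this
  set m := S.max' hSne with hm
  have hmS : m ∈ S := S.max'_mem hSne
  have hmIcc : m ∈ Finset.Icc 1 T := (Finset.mem_filter.mp hmS).1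
  have hmlt : vE m < vB m := (Finset.mem_filter.mp hmS).2
  have hm1 : 1 ≤ m := (Finset.mem_Icc.mp hmIcc).1
  have hmT : m ≤ T := (Finset.mem_Icc.mp hmIcc).2
  have habove : ∀ t, t ∈ Finset.Icc 1 T → m < t → vB t ≤ vE t := by
    intro t ht hmt
    by_contra hc
    push_neg at hc
    have : t ∈ S := by rw [hS]; exact Finset.mem_filter.mpr ⟨ht, hc⟩
    have := S.le_max' t this
    omega
  have hdown : ∀ s, s ∈ Finset.Icc 1 T → s ≤ m → vE s < vB s := by
    intro s hs hsm
    rcases eq_or_lt_of_le hsm with h | h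
    · rw [h]; exact hmlt
    · by_contra hc
      push_neg at hc
      exact key s m hs hmIcc h (Or.inr (Or.inr hmlt)) hc hmlt.le
  have hmltT : m < T := by
    by_contra hc
    have hmeqT : m = T := by omega
    have := sumlt vE vB hEnonneg
      (fun x hx => (hdown x hx (by
        have := (Finset.mem_Icc.mp hx).2
        omega)).le) 1 hmem1 (hdown 1 hmem1 (by omega))
    rw [hEI, hBI] at this
    exact lt_irrefl I this
  have hstrictabove : ∀ t, t ∈ Finset.Icc 1 T → m + 1 < t → vB t < vE t := by
    intro t ht hmt
    rcases lt_or_eq_of_le (habove t ht (by omega)) with h | h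
    · exact h
    have hm1Icc : m + 1 ∈ Finset.Icc 1 T := Finset.mem_Icc.mpr ⟨by omega, by
      have := (Finset.mem_Icc.mp ht).2
      omega⟩
    have htT : t ≤ T := (Finset.mem_Icc.mp ht).2
    exfalso
    by_cases hc : m + 1 = T - 1 ∧ t = T
    · -- the equal-ratio pair (T-1, T); here m = T-2
      rcases lt_or_eq_of_le (habove (m+1) hm1Icc (by omega)) with h2 | h2
      · exact key (m+1) t hm1Icc ht (by omega) (Or.inr (Or.inl h2)) h2.le h.ge
      · have hle_all : ∀ x ∈ Finset.Icc 1 T, vE x ≤ vB x := by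
          intro x hx
          have hx2 := (Finset.mem_Icc.mp hx).2
          rcases Nat.lt_or_ge x (m+1) with h3 | h3
          · exact (hdown x hx (by omega)).le
          · rcases Nat.lt_or_ge x t with h4 | h4
            · have : x = m + 1 := by omega
              rw [this]; exact h2.ge
            · have : x = t := by omega
              rw [this]; exact h.ge
        have := sumlt vE vB hEnonneg hle_all 1 hmem1 (hdown 1 hmem1 (by omega))
        rw [hEI, hBI] at this
        exact lt_irrefl I this
    · exact key (m+1) t hm1Icc ht (by omega)
        (Or.inl (hratio_strict (m+1) t (by omega) (by omega) htT hc))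
        (habove (m+1) hm1Icc (by omega)) h.ge
  by_cases hcase : m ≤ T - 2
  · refine ⟨m + 1, Finset.mem_Icc.mpr ⟨by omega, by omega⟩, ?_, ?_⟩
    · intro t ht hlt
      exact hdown t ht (by omega)
    · intro t ht hgt
      exact hstrictabove t ht hgt
  · -- m = T - 1
    have hmeq : m = T - 1 := by omega
    refine ⟨T - 1, Finset.mem_Icc.mpr ⟨by omega, by omega⟩, ?_, ?_⟩
    · intro t ht hlt
      exact hdown t ht (by omega)
    · intro t ht hgt
      have htT : t = T := by
        have := (Finset.mem_Icc.mp ht).2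
        omega
      rcases lt_or_eq_of_le (habove t ht (by omega)) with h | h
      · exact h
      · exfalso
        have hle_all : ∀ x ∈ Finset.Icc 1 T, vE x ≤ vB x := by
          intro x hx
          have hx2 := (Finset.mem_Icc.mp hx).2
          rcases Nat.lt_or_ge x T with h3 | h3
          · exact (hdown x hx (by omega)).le
          · have : x = T := by omega
            rw [this, ← htT]
            exact h.ge
        have := sumlt vE vB hEnonneg hle_all 1 hmem1 (hdown 1 hmem1 (by omega))
        rw [hEI, hBI] at this
        exact lt_irrefl I this
end

section
/- Lemma 2 (Structure of the solution to Problem II). A maximizer of Problem II exists, and every maximizer v satisfies: (i) v_t(L^{t−1}, δ₂) = 0 for every t ∈ {2,…,T−1}; (ii) the values (v_t(L^t))_{t=1}^T are the unique maximizer of Σ_{t=1}^{T−1} β^{t−1} u_t + β^{T−2} δ₁ u_T over nonnegative sequences (u_t)_{t=1}^T subject to Σ_{t=1}^T φ(u_t)/R^{t−1} ≤ I; and (iii) the agent's expected payoff at the maximizer equals this maximized value. -/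
/-- A policy for Problem IV with horizon `T` and `N` types, for a fixed initial type.
Paths `ω : Fin (T-2) → Fin N` record the type draws at dates `2,…,T-1` (coordinate `s`
is the draw at date `s+2`).  `v t ω` is the date-`t` utility; `adapted` says that for
`t ≤ T-1` it depends only on the draws at dates `2,…,t` (so `v 1` is constant and
`v T` depends on the draws at dates `2,…,T-1`). -/
structure PolicyIV (T N : ℕ) where
  v : ℕ → (Fin (T - 2) → Fin N) → ℝ
  adapted : ∀ t : ℕ, t ≤ T - 1 → ∀ ω ω' : Fin (T - 2) → Fin N,
    (∀ s : Fin (T - 2), (s : ℕ) + 2 ≤ t → ω s = ω' s) → v t ω = v t ω'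

/-- Splice two paths: keep the draws of `ω` at dates `≤ t` and of `ω'` at dates `> t`. -/
def splice (T N : ℕ) (t : ℕ) (ω ω' : Fin (T - 2) → Fin N) : Fin (T - 2) → Fin N :=
  fun s => if (s : ℕ) + 2 ≤ t then ω s else ω' s

/-- Expectation over paths with i.i.d. coordinate weights `r`. -/
noncomputable def Epath (T N : ℕ) (r : Fin N → ℝ) (f : (Fin (T - 2) → Fin N) → ℝ) : ℝ :=
  ∑ ω : Fin (T - 2) → Fin N, (∏ s, r (ω s)) * f ω

/-- Discounting of date-`t` utility from date 2: `Π_{s=2}^{t-1} δ̃_s`. -/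
noncomputable def discIV (T N : ℕ) (δ : Fin N → ℝ) (t : ℕ) (ω : Fin (T - 2) → Fin N) : ℝ :=
  ∏ s : Fin (T - 2), if (s : ℕ) + 2 < t then δ (ω s) else 1

/-- Discounting of date-`τ` utility from date `t+1`: `Π_{s=t+1}^{τ-1} δ̃_s`. -/
noncomputable def discCont (T N : ℕ) (δ : Fin N → ℝ) (t τ : ℕ) (ω : Fin (T - 2) → Fin N) : ℝ :=
  ∏ s : Fin (T - 2), if t + 1 ≤ (s : ℕ) + 2 ∧ (s : ℕ) + 2 < τ then δ (ω s) else 1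

/-- The discount factor realised at date `t` along the path `ω` (for `2 ≤ t ≤ T-1`). -/
noncomputable def deltaAt (T N : ℕ) (δ : Fin N → ℝ) (t : ℕ) (ω : Fin (T - 2) → Fin N) : ℝ :=
  ∏ s : Fin (T - 2), if (s : ℕ) + 2 = t then δ (ω s) else 1

/-- The agent's expected discounted continuation utility from date `t+1` onwards,
after the history and report recorded in `ω` up to date `t`, with agent beliefs `q`:
`E_A[Σ_{τ=t+1}^T (Π_{s=t+1}^{τ-1} δ̃_s) v_τ]`. -/
noncomputable def contA (T N : ℕ) (δ q : Fin N → ℝ)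
    (v : ℕ → (Fin (T - 2) → Fin N) → ℝ) (t : ℕ) (ω : Fin (T - 2) → Fin N) : ℝ :=
  Epath T N q (fun ω' => ∑ τ ∈ Finset.Icc (t + 1) T,
    discCont T N δ t τ (splice T N t ω ω') * v τ (splice T N t ω ω'))

/-- The agent's expected payoff: `v₁ + δ₁·E_A[Σ_{t=2}^T (Π_{s=2}^{t-1} δ̃_s) v_t]`. -/
noncomputable def payoffIV (T N : ℕ) (δ q : Fin N → ℝ) (δ1 : ℝ) (P : PolicyIV T N) : ℝ :=
  Epath T N q (fun ω => P.v 1 ω + δ1 * ∑ t ∈ Finset.Icc 2 T, discIV T N δ t ω * P.v t ω)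

/-- The firm's expected discounted cost: `φ(v₁) + E_F[Σ_{t=2}^T φ(v_t)/R^(t-1)]`. -/
noncomputable def costIV (T N : ℕ) (p : Fin N → ℝ) (φ : ℝ → ℝ) (R : ℝ) (P : PolicyIV T N) : ℝ :=
  Epath T N p (fun ω => φ (P.v 1 ω) + ∑ t ∈ Finset.Icc 2 T, φ (P.v t ω) / R ^ (t - 1))

/-- All incentive constraints `IC(t,H,δ,δ̂)`: at every date `t ∈ {2,…,T-1}` and after
any history (the common prefix of `ω` and `ω'`), the agent with true date-`t` type
(the date-`t` coordinate of `ω`) prefers its own report to any other report (the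
date-`t` coordinate of `ω'`). -/
def ICIV (T N : ℕ) (δ q : Fin N → ℝ) (P : PolicyIV T N) : Prop :=
  ∀ t : ℕ, 2 ≤ t → t ≤ T - 1 → ∀ ω ω' : Fin (T - 2) → Fin N,
    (∀ s : Fin (T - 2), (s : ℕ) + 2 < t → ω s = ω' s) →
    P.v t ω' + deltaAt T N δ t ω * contA T N δ q P.v t ω' ≤
      P.v t ω + deltaAt T N δ t ω * contA T N δ q P.v t ω

/-- Feasibility for Problem IV: utilities bounded below by `m = u 0`, the firm
break-even condition, and all incentive constraints. -/
def FeasIV (T N : ℕ) (δ p q : Fin N → ℝ) (φ : ℝ → ℝ) (R I m : ℝ) (P : PolicyIV T N) : Prop :=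
  (∀ t ∈ Finset.Icc 1 T, ∀ ω, m ≤ P.v t ω) ∧
  costIV T N p φ R P ≤ I ∧ ICIV T N δ q P

/-- In the two-type model of Section 3 the firm believes the agent is always
impatient, so the break-even condition only involves the all-low history
`L^t` (the path `fun _ => 0`): `Σ_{t=1}^T φ(v_t(L^t))/R^(t-1) ≤ I`. -/
noncomputable def costII (T : ℕ) (φ : ℝ → ℝ) (R : ℝ) (P : PolicyIV T 2) : ℝ :=
  ∑ t ∈ Finset.Icc 1 T, φ (P.v t (fun _ => 0)) / R ^ (t - 1)

/-- Feasibility for Problem II: nonnegative utilities, all incentive constraints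
(with types `![δ1, δ2]` and agent beliefs `![q1, q2]`), and firm break-even. -/
def FeasII (T : ℕ) (δ1 δ2 q1 q2 : ℝ) (φ : ℝ → ℝ) (R I : ℝ) (P : PolicyIV T 2) : Prop :=
  (∀ t ∈ Finset.Icc 1 T, ∀ ω, 0 ≤ P.v t ω) ∧
  ICIV T 2 ![δ1, δ2] ![q1, q2] P ∧
  costII T φ R P ≤ I

/-- Feasibility in the reduced (deterministic) problem. -/
def FeasRed (T : ℕ) (φ : ℝ → ℝ) (R I : ℝ) (u : ℕ → ℝ) : Prop :=
  (∀ t ∈ Finset.Icc 1 T, 0 ≤ u t) ∧ ∑ t ∈ Finset.Icc 1 T, φ (u t) / R ^ (t - 1) ≤ I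

/-- Objective of the reduced problem: `Σ_{t=1}^{T-1} β^(t-1) u t + β^(T-2) δ₁ u T`. -/
noncomputable def objRed (T : ℕ) (β δ1 : ℝ) (u : ℕ → ℝ) : ℝ :=
  (∑ t ∈ Finset.Icc 1 (T - 1), β ^ (t - 1) * u t) + β ^ (T - 2) * δ1 * u T

section Infra
open Finset

lemma sum_weights {M : ℕ} (q : Fin 2 → ℝ) (hq : q 0 + q 1 = 1) :
    ∑ ω : Fin M → Fin 2, ∏ s, q (ω s) = 1 := by
  rw [← Fintype.piFinset_univ, ← Finset.prod_univ_sum]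
  simp [Fin.sum_univ_two, hq]

lemma sum_affine {M : ℕ} (q : Fin 2 → ℝ) (hq : q 0 + q 1 = 1)
    (c d : ℝ) (g : (Fin M → Fin 2) → ℝ) :
    ∑ ω : Fin M → Fin 2, (∏ s, q (ω s)) * (c + d * g ω)
      = c + d * ∑ ω : Fin M → Fin 2, (∏ s, q (ω s)) * g ω := by
  have h := sum_weights (M := M) q hq
  rw [Finset.mul_sum, ← sub_eq_zero]
  have : ∀ ω : Fin M → Fin 2, (∏ s, q (ω s)) * (c + d * g ω)
      = c * (∏ s, q (ω s)) + d * ((∏ s, q (ω s)) * g ω) := by intro ω; ring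
  simp only [this, Finset.sum_add_distrib, ← Finset.mul_sum, h]
  ring

lemma Epath_cond {M : ℕ} (q : Fin 2 → ℝ) (hq : q 0 + q 1 = 1) (j : Fin M)
    (F : Fin 2 → (Fin M → Fin 2) → ℝ)
    (hF : ∀ i i' ω, F i (Function.update ω j i') = F i ω) :
    ∑ ω : Fin M → Fin 2, (∏ s, q (ω s)) * F (ω j) ω
      = ∑ i, q i * ∑ ω : Fin M → Fin 2, (∏ s, q (ω s)) * F i ω := by
  classical
  set S : Fin 2 → Fin 2 → ℝ := fun i' i =>
    ∑ ω ∈ Finset.univ.filter (fun ω : Fin M → Fin 2 => ω j = i'),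
      (∏ s ∈ Finset.univ.erase j, q (ω s)) * F i ω with hS
  have key : ∀ i i' : Fin 2, S i' i = S i i := by
    intro i i'
    refine Finset.sum_bij' (fun ω _ => Function.update ω j i)
      (fun ω _ => Function.update ω j i') ?hi ?hj ?left ?right ?h
    case hi => intro ω hω; simp [Function.update_self]
    case hj => intro ω hω; simp [Function.update_self]
    case left =>
      intro ω hω
      simp only [Finset.mem_filter] at hω
      rw [Function.update_idem, ← hω.2, Function.update_eq_self]
    case right =>
      intro ω hω
      simp only [Finset.mem_filter] at hω
      rw [Function.update_idem, ← hω.2, Function.update_eq_self]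
    case h =>
      intro ω hω
      congr 1
      · apply Finset.prod_congr rfl
        intro s hs
        rw [Function.update_of_ne (Finset.ne_of_mem_erase hs)]
      · exact (hF i i ω).symm
  have fib : ∀ G : (Fin M → Fin 2) → ℝ,
      ∑ ω : Fin M → Fin 2, G ω
        = ∑ i' : Fin 2, ∑ ω ∈ Finset.univ.filter (fun ω : Fin M → Fin 2 => ω j = i'), G ω := by
    intro G
    exact (Finset.sum_fiberwise _ (fun ω => ω j) G).symm
  have prodsplit : ∀ ω : Fin M → Fin 2,
      (∏ s, q (ω s)) = q (ω j) * ∏ s ∈ Finset.univ.erase j, q (ω s) :=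
    fun ω => (Finset.mul_prod_erase Finset.univ _ (Finset.mem_univ j)).symm
  have lhs_eq : ∑ ω : Fin M → Fin 2, (∏ s, q (ω s)) * F (ω j) ω
      = ∑ i' : Fin 2, q i' * S i' i' := by
    rw [fib]
    apply Finset.sum_congr rfl
    intro i' _
    rw [hS, Finset.mul_sum]
    apply Finset.sum_congr rfl
    intro ω hω
    simp only [Finset.mem_filter] at hω
    rw [prodsplit, hω.2]; ring
  have rhs_eq : ∀ i : Fin 2,
      ∑ ω : Fin M → Fin 2, (∏ s, q (ω s)) * F i ω = S i i := by
    intro i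
    rw [fib]
    have h1 : ∀ i' : Fin 2,
        ∑ ω ∈ Finset.univ.filter (fun ω : Fin M → Fin 2 => ω j = i'),
          (∏ s, q (ω s)) * F i ω = q i' * S i' i := by
      intro i'
      rw [hS, Finset.mul_sum]
      apply Finset.sum_congr rfl
      intro ω hω
      simp only [Finset.mem_filter] at hω
      rw [prodsplit, hω.2]; ring
    simp only [h1]
    have h2 : ∀ i' : Fin 2, q i' * S i' i = q i' * S i i := fun i' => by rw [key i i']
    rw [Fin.sum_univ_two, h2 0, h2 1, ← add_mul, hq, one_mul]
  simp only [rhs_eq, lhs_eq]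

variable {T : ℕ} (δ q : Fin 2 → ℝ) (P : PolicyIV T 2)

lemma contA_rec (hT : 3 ≤ T) (hq : q 0 + q 1 = 1) (t : ℕ) (ht2 : 2 ≤ t) (htT : t ≤ T - 1)
    (ω : Fin (T - 2) → Fin 2) :
    contA T 2 δ q P.v (t - 1) ω
      = ∑ i, q i * (P.v t (Function.update ω ⟨t - 2, by omega⟩ i)
          + δ i * contA T 2 δ q P.v t (Function.update ω ⟨t - 2, by omega⟩ i)) := by
  set j : Fin (T - 2) := ⟨t - 2, by omega⟩ with hj
  have hj2 : (j : ℕ) = t - 2 := by rw [hj]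
  set upd : Fin 2 → (Fin (T - 2) → Fin 2) := fun i => Function.update ω j i with hupd
  set F : Fin 2 → (Fin (T - 2) → Fin 2) → ℝ := fun i ω' =>
    P.v t (upd i) + δ i * ∑ τ ∈ Finset.Icc (t + 1) T,
      discCont T 2 δ t τ (splice T 2 t (upd i) ω') * P.v τ (splice T 2 t (upd i) ω') with hF
  have hFind : ∀ i i' ω', F i (Function.update ω' j i') = F i ω' := by
    intro i i' ω'
    have hsp : splice T 2 t (upd i) (Function.update ω' j i') = splice T 2 t (upd i) ω' := by
      funext s
      simp only [splice]
      by_cases hs : (s : ℕ) + 2 ≤ t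
      · rw [if_pos hs, if_pos hs]
      · have hsj : s ≠ j := fun h => hs (by rw [h]; omega)
        rw [if_neg hs, if_neg hs, Function.update_of_ne hsj]
    simp only [hF, hsp]
  have hint : ∀ ω' : Fin (T - 2) → Fin 2,
      (∑ τ ∈ Finset.Icc (t - 1 + 1) T,
        discCont T 2 δ (t - 1) τ (splice T 2 (t - 1) ω ω') * P.v τ (splice T 2 (t - 1) ω ω'))
      = F (ω' j) ω' := by
    intro ω'
    have ht1 : t - 1 + 1 = t := by omega
    set σ := splice T 2 (t - 1) ω ω' with hσ
    have hσ' : σ = splice T 2 t (upd (ω' j)) ω' := by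
      funext s
      simp only [hσ, splice, hupd]
      by_cases h1 : (s : ℕ) + 2 ≤ t - 1
      · have h2 : (s : ℕ) + 2 ≤ t := by omega
        have hsj : s ≠ j := fun h => by rw [h] at h1; omega
        rw [if_pos h1, if_pos h2, Function.update_of_ne hsj]
      · by_cases h2 : (s : ℕ) + 2 ≤ t
        · have hsj : s = j := by apply Fin.ext; rw [hj2]; omega
          rw [if_neg h1, if_pos h2, hsj, Function.update_self]
        · rw [if_neg h1, if_neg h2]
    have hmem : t ∈ Finset.Icc t T := by simp [Finset.mem_Icc]; omega
    have hins : Finset.Icc t T = insert t (Finset.Icc (t + 1) T) := by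
      rw [Finset.Icc_add_one_left_eq_Ioc, ← Finset.Icc_erase_left, Finset.insert_erase hmem]
    have hnot : t ∉ Finset.Icc (t + 1) T := by simp [Finset.mem_Icc]
    have hdisc1 : discCont T 2 δ (t - 1) t σ = 1 := by
      unfold discCont
      apply Finset.prod_eq_one
      intro s _
      rw [if_neg (by omega)]
    have hvt : P.v t σ = P.v t (upd (ω' j)) := by
      apply P.adapted t htT
      intro s hs
      rw [hσ']
      simp only [splice, if_pos hs]
    have hterm : ∀ τ ∈ Finset.Icc (t + 1) T,
        discCont T 2 δ (t - 1) τ σ * P.v τ σ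
          = δ (ω' j) * (discCont T 2 δ t τ σ * P.v τ σ) := by
      intro τ hτ
      rw [Finset.mem_Icc] at hτ
      have hσj : σ j = ω' j := by
        simp only [hσ, splice]
        rw [if_neg (by omega)]
      have e1 : discCont T 2 δ (t - 1) τ σ = δ (ω' j) * discCont T 2 δ t τ σ := by
        unfold discCont
        rw [← Finset.mul_prod_erase Finset.univ _ (Finset.mem_univ j),
            ← Finset.mul_prod_erase Finset.univ
              (fun s : Fin (T - 2) => if t + 1 ≤ (s : ℕ) + 2 ∧ (s : ℕ) + 2 < τ then δ (σ s) else 1)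
              (Finset.mem_univ j)]
        rw [if_pos (by omega : t - 1 + 1 ≤ (j : ℕ) + 2 ∧ (j : ℕ) + 2 < τ),
            if_neg (by omega : ¬(t + 1 ≤ (j : ℕ) + 2 ∧ (j : ℕ) + 2 < τ)), hσj, one_mul]
        congr 1
        apply Finset.prod_congr rfl
        intro s hs
        have hsj : s ≠ j := Finset.ne_of_mem_erase hs
        have hs2 : (s : ℕ) + 2 ≠ t := fun h => hsj (by apply Fin.ext; rw [hj2]; omega)
        apply if_congr _ rfl rfl
        constructor <;> (intro h; constructor <;> omega)
      rw [e1, mul_assoc]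
    rw [ht1, hins, Finset.sum_insert hnot, hdisc1, one_mul, hvt,
        Finset.sum_congr rfl hterm, ← Finset.mul_sum]
    simp only [hF, hσ']
  show Epath T 2 q _ = _
  unfold Epath
  simp only [hint]
  rw [Epath_cond q hq j F hFind]
  apply Finset.sum_congr rfl
  intro i _
  congr 1
  exact sum_affine q hq _ _ _

lemma contA_last (hT : 3 ≤ T) (hq : q 0 + q 1 = 1) (ω : Fin (T - 2) → Fin 2) :
    contA T 2 δ q P.v (T - 1) ω = P.v T ω := by
  unfold contA
  have h1 : T - 1 + 1 = T := by omega
  have hsp : ∀ ω' : Fin (T - 2) → Fin 2, splice T 2 (T - 1) ω ω' = ω := by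
    intro ω'
    funext s
    simp only [splice]
    rw [if_pos (by omega : (s : ℕ) + 2 ≤ T - 1)]
  have : ∀ ω' : Fin (T - 2) → Fin 2,
      (∑ τ ∈ Finset.Icc (T - 1 + 1) T,
        discCont T 2 δ (T - 1) τ (splice T 2 (T - 1) ω ω') * P.v τ (splice T 2 (T - 1) ω ω'))
      = P.v T ω := by
    intro ω'
    rw [h1, Finset.Icc_self, Finset.sum_singleton, hsp]
    have : discCont T 2 δ (T - 1) T ω = 1 := by
      unfold discCont
      apply Finset.prod_eq_one
      intro s _
      rw [if_neg (by omega)]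
    rw [this, one_mul]
  unfold Epath
  simp only [this]
  rw [← Finset.sum_mul, sum_weights q hq, one_mul]

lemma payoff_eq (hT : 3 ≤ T) (hq : q 0 + q 1 = 1) (δ1 : ℝ) (ω₀ : Fin (T - 2) → Fin 2) :
    payoffIV T 2 δ q δ1 P = P.v 1 ω₀ + δ1 * contA T 2 δ q P.v 1 ω₀ := by
  unfold payoffIV contA Epath
  have hsp : ∀ ω' : Fin (T - 2) → Fin 2, splice T 2 1 ω₀ ω' = ω' := by
    intro ω'
    funext s
    simp only [splice]
    rw [if_neg (by omega)]
  have key : ∀ ω : Fin (T - 2) → Fin 2,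
      P.v 1 ω + δ1 * ∑ t ∈ Finset.Icc 2 T, discIV T 2 δ t ω * P.v t ω
      = P.v 1 ω₀ + δ1 * ∑ τ ∈ Finset.Icc (1 + 1) T,
          discCont T 2 δ 1 τ (splice T 2 1 ω₀ ω) * P.v τ (splice T 2 1 ω₀ ω) := by
    intro ω
    have h1 : P.v 1 ω = P.v 1 ω₀ := P.adapted 1 (by omega) ω ω₀ (fun s hs => by omega)
    have h2 : ∀ t, discIV T 2 δ t ω = discCont T 2 δ 1 t ω := by
      intro t
      unfold discIV discCont
      apply Finset.prod_congr rfl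
      intro s _
      apply if_congr _ rfl rfl
      constructor
      · intro h; exact ⟨by omega, h⟩
      · intro h; exact h.2
    rw [h1]
    congr 1
    congr 1
    apply Finset.sum_congr rfl
    intro τ _
    rw [hsp, h2]
  simp only [key]
  exact sum_affine q hq _ _ _

lemma deltaAt_eval (hT : 3 ≤ T) (t : ℕ) (ht2 : 2 ≤ t) (htT : t ≤ T - 1)
    (ω : Fin (T - 2) → Fin 2) :
    deltaAt T 2 δ t ω = δ (ω ⟨t - 2, by omega⟩) := by
  unfold deltaAt
  rw [Finset.prod_eq_single (⟨t - 2, by omega⟩ : Fin (T - 2))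
    (fun b _ hb => by
      rw [if_neg]
      intro h
      exact hb (Fin.ext (show (b:ℕ) = t - 2 by omega)))
    (fun h => absurd (Finset.mem_univ _) h)]
  rw [if_pos (show ((⟨t - 2, by omega⟩ : Fin (T - 2)) : ℕ) + 2 = t by show t - 2 + 2 = t; omega)]
end Infra
noncomputable def GS (T : ℕ) (β : ℝ) (w : ℕ → ℝ) (c : ℝ) (t : ℕ) : ℝ :=
  (∑ τ ∈ Finset.Icc t (T - 1), β ^ (τ - t) * w τ) + β ^ (T - t) * c

lemma GS_rec (T : ℕ) (β : ℝ) (w : ℕ → ℝ) (c : ℝ) (t : ℕ) (h : t ≤ T - 1) (hT : 3 ≤ T) :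
    GS T β w c t = w t + β * GS T β w c (t + 1) := by
  unfold GS
  have hmem : t ∈ Finset.Icc t (T - 1) := by simp [Finset.mem_Icc]; omega
  have hins : Finset.Icc t (T - 1) = insert t (Finset.Icc (t + 1) (T - 1)) := by
    rw [Finset.Icc_add_one_left_eq_Ioc, ← Finset.Icc_erase_left, Finset.insert_erase hmem]
  rw [hins, Finset.sum_insert (by simp [Finset.mem_Icc]), Nat.sub_self, pow_zero, one_mul]
  have e1 : ∑ τ ∈ Finset.Icc (t + 1) (T - 1), β ^ (τ - t) * w τ
      = β * ∑ τ ∈ Finset.Icc (t + 1) (T - 1), β ^ (τ - (t + 1)) * w τ := by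
    rw [Finset.mul_sum]
    apply Finset.sum_congr rfl
    intro τ hτ
    rw [Finset.mem_Icc] at hτ
    rw [show τ - t = (τ - (t + 1)) + 1 by omega, pow_succ]
    ring
  rw [e1, show T - t = (T - (t + 1)) + 1 by omega, pow_succ]
  ring

lemma GS_nonneg (T : ℕ) (β : ℝ) (hβ : 0 ≤ β) (w : ℕ → ℝ) (c : ℝ) (t : ℕ)
    (hw : ∀ τ ∈ Finset.Icc t (T - 1), 0 ≤ w τ) (hc : 0 ≤ c) : 0 ≤ GS T β w c t := by
  unfold GS
  have h1 : 0 ≤ ∑ τ ∈ Finset.Icc t (T - 1), β ^ (τ - t) * w τ :=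
    Finset.sum_nonneg fun τ hτ => mul_nonneg (pow_nonneg hβ _) (hw τ hτ)
  have h2 : 0 ≤ β ^ (T - t) * c := mul_nonneg (pow_nonneg hβ _) hc
  linarith

lemma GS_to_obj (T : ℕ) (hT : 3 ≤ T) (β δ1 A K : ℝ) (hA : δ1 * A = β) (vL vh : ℕ → ℝ) :
    vL 1 + δ1 * GS T β (fun τ => A * vL τ - K * vh τ) (vL T) 2
      = objRed T β δ1 vL - ∑ τ ∈ Finset.Icc 2 (T - 1), β ^ (τ - 2) * (δ1 * K) * vh τ := by
  unfold GS objRed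
  have hmem : 1 ∈ Finset.Icc 1 (T - 1) := by simp [Finset.mem_Icc]; omega
  have hins : Finset.Icc 1 (T - 1) = insert 1 (Finset.Icc 2 (T - 1)) := by
    rw [← Finset.insert_erase hmem, Finset.Icc_erase_left, ← Finset.Icc_add_one_left_eq_Ioc]
    rfl
  rw [hins, Finset.sum_insert (by simp [Finset.mem_Icc])]
  rw [Nat.sub_self, pow_zero, one_mul]
  have key : ∀ τ ∈ Finset.Icc 2 (T - 1),
      δ1 * (β ^ (τ - 2) * (A * vL τ - K * vh τ))
        = β ^ (τ - 1) * vL τ - β ^ (τ - 2) * (δ1 * K) * vh τ := by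
    intro τ hτ
    rw [Finset.mem_Icc] at hτ
    rw [show τ - 1 = (τ - 2) + 1 by omega, pow_succ, ← hA]
    ring
  rw [mul_add, Finset.mul_sum, Finset.sum_congr rfl key, Finset.sum_sub_distrib]
  ring

lemma phi_big (φ : ℝ → ℝ)
    (hφc : ContinuousOn φ (Set.Ici 0))
    (hφd : ContDiffOn ℝ 2 φ (Set.Ioi 0))
    (hφtend : Filter.Tendsto (deriv φ) Filter.atTop Filter.atTop) :
    ∀ C : ℝ, ∃ B : ℝ, 0 ≤ B ∧ C ≤ φ B := by
  intro C
  obtain ⟨a, ha⟩ := (hφtend.eventually_ge_atTop 1).exists_forall_of_atTop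
  set a' : ℝ := max a 1 with ha'
  have ha'1 : (1 : ℝ) ≤ a' := le_max_right _ _
  have hdiff : DifferentiableOn ℝ φ (Set.Ioi 0) :=
    hφd.differentiableOn (by norm_num)
  have claim : ∀ x, a' ≤ x → φ a' + (x - a') ≤ φ x := by
    intro x hx
    rcases eq_or_lt_of_le hx with h | h
    · rw [← h]; simp
    · obtain ⟨c, hc, hc2⟩ := exists_deriv_eq_slope φ h
        (hφc.mono (by intro y hy; simp at hy ⊢; linarith [hy.1]))
        (hdiff.mono (by intro y hy; simp at hy ⊢; linarith [hy.1]))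
      have hca : a ≤ c := by
        have := hc.1
        have : a' ≤ c := le_of_lt hc.1
        calc a ≤ a' := le_max_left _ _
          _ ≤ c := this
      have h1 : (1 : ℝ) ≤ (φ x - φ a') / (x - a') := hc2 ▸ ha c hca
      have hxa : 0 < x - a' := by linarith
      rw [le_div_iff₀ hxa] at h1
      linarith
  refine ⟨max a' (a' + (C - φ a')), by positivity, ?_⟩
  have h1 : a' ≤ max a' (a' + (C - φ a')) := le_max_left _ _
  have h2 := claim _ h1
  have h3 : a' + (C - φ a') ≤ max a' (a' + (C - φ a')) := le_max_right _ _
  linarith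

lemma feas_bound (T : ℕ) (R I : ℝ) (hR : 1 ≤ R) (hI : 0 < I)
    (φ : ℝ → ℝ) (hφm : StrictMonoOn φ (Set.Ici 0)) (hφ0 : φ 0 = 0)
    (B : ℝ) (hB : 0 ≤ B) (hBig : I * R ^ (T - 1) ≤ φ B)
    (u : ℕ → ℝ) (hu : FeasRed T φ R I u) : ∀ t ∈ Finset.Icc 1 T, u t ≤ B := by
  intro t ht
  have hR0 : (0 : ℝ) < R := by linarith
  have hnn : ∀ τ ∈ Finset.Icc 1 T, 0 ≤ φ (u τ) / R ^ (τ - 1) := by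
    intro τ hτ
    apply div_nonneg _ (le_of_lt (pow_pos hR0 _))
    rw [← hφ0]
    exact hφm.monotoneOn (by simp) (by simpa using hu.1 τ hτ) (hu.1 τ hτ)
  have h1 : φ (u t) / R ^ (t - 1) ≤ I :=
    le_trans (Finset.single_le_sum hnn ht) hu.2
  have h2 : φ (u t) ≤ I * R ^ (t - 1) := by
    rw [div_le_iff₀ (pow_pos hR0 _)] at h1
    exact h1
  have h3 : I * R ^ (t - 1) ≤ I * R ^ (T - 1) := by
    apply mul_le_mul_of_nonneg_left _ (le_of_lt hI)
    apply pow_le_pow_right₀ hR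
    rw [Finset.mem_Icc] at ht
    omega
  by_contra hc
  push_neg at hc
  have := hφm (Set.mem_Ici.mpr hB) (Set.mem_Ici.mpr (hu.1 t ht)) hc
  linarith

lemma red_exists (T : ℕ) (hT : 3 ≤ T) (R I : ℝ) (hR : 1 ≤ R) (hI : 0 < I)
    (φ : ℝ → ℝ)
    (hφc : ContinuousOn φ (Set.Ici 0))
    (hφm : StrictMonoOn φ (Set.Ici 0))
    (hφd : ContDiffOn ℝ 2 φ (Set.Ioi 0))
    (hφ0 : φ 0 = 0)
    (hφtend : Filter.Tendsto (deriv φ) Filter.atTop Filter.atTop)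
    (β δ1 : ℝ) :
    ∃ u : ℕ → ℝ, FeasRed T φ R I u ∧
      ∀ w : ℕ → ℝ, FeasRed T φ R I w → objRed T β δ1 w ≤ objRed T β δ1 u := by
  classical
  obtain ⟨B, hB0, hBig⟩ := phi_big φ hφc hφd hφtend (I * R ^ (T - 1))
  set ψ : ℝ → ℝ := fun y => φ (max y 0) with hψ
  have hψc : Continuous ψ :=
    hφc.comp_continuous (continuous_id.max continuous_const)
      (fun y => Set.mem_Ici.mpr (le_max_right y 0))
  have hψeq : ∀ y : ℝ, 0 ≤ y → ψ y = φ y := by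
    intro y hy; simp only [hψ, max_eq_left hy]
  set ext : (Fin (T + 1) → ℝ) → ℕ → ℝ :=
    fun x t => if h : t < T + 1 then x ⟨t, h⟩ else 0 with hext
  have hextx : ∀ (x : Fin (T + 1) → ℝ) (t : ℕ) (h : t < T + 1), ext x t = x ⟨t, h⟩ := by
    intro x t h; simp only [hext, dif_pos h]
  set costX : (Fin (T + 1) → ℝ) → ℝ :=
    fun x => ∑ t ∈ Finset.Icc 1 T, ψ (ext x t) / R ^ (t - 1) with hcostX
  have hcostc : Continuous costX := by
    apply continuous_finset_sum
    intro t ht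
    rw [Finset.mem_Icc] at ht
    have h : t < T + 1 := by omega
    have he : (fun x : Fin (T + 1) → ℝ => ext x t) = fun x => x ⟨t, h⟩ := by
      funext x; exact hextx x t h
    apply Continuous.div_const
    exact hψc.comp (he ▸ continuous_apply _)
  set objX : (Fin (T + 1) → ℝ) → ℝ := fun x => objRed T β δ1 (ext x) with hobjX
  have hobjc : Continuous objX := by
    apply Continuous.add
    · apply continuous_finset_sum
      intro t ht
      rw [Finset.mem_Icc] at ht
      have h : t < T + 1 := by omega
      have he : (fun x : Fin (T + 1) → ℝ => ext x t) = fun x => x ⟨t, h⟩ := by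
        funext x; exact hextx x t h
      exact (continuous_const.mul (he ▸ continuous_apply _))
    · have h : T < T + 1 := by omega
      have he : (fun x : Fin (T + 1) → ℝ => ext x T) = fun x => x ⟨T, h⟩ := by
        funext x; exact hextx x T h
      exact (continuous_const.mul (he ▸ continuous_apply _))
  set K : Set (Fin (T + 1) → ℝ) := Set.pi Set.univ (fun _ => Set.Icc (0 : ℝ) B) with hK
  have hKc : IsCompact K := isCompact_univ_pi (fun _ => isCompact_Icc)
  set D : Set (Fin (T + 1) → ℝ) := K ∩ {x | costX x ≤ I} with hD
  have hDc : IsCompact D := hKc.inter_right (isClosed_le hcostc continuous_const)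
  have hDne : D.Nonempty := by
    refine ⟨fun _ => 0, fun i _ => ⟨le_refl _, hB0⟩, ?_⟩
    show costX (fun _ => 0) ≤ I
    have hz : costX (fun _ => 0) = 0 := by
      simp only [hcostX]
      apply Finset.sum_eq_zero
      intro t _
      have he : ext (fun _ => (0:ℝ)) t = 0 := by
        simp only [hext]; split <;> rfl
      rw [he, hψeq 0 (le_refl _), hφ0, zero_div]
    rw [hz]; linarith
  obtain ⟨x0, hx0D, hx0max⟩ := hDc.exists_isMaxOn hDne hobjc.continuousOn
  have hx0nn : ∀ t ∈ Finset.Icc 1 T, 0 ≤ ext x0 t := by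
    intro t ht
    rw [Finset.mem_Icc] at ht
    rw [hextx x0 t (by omega)]
    exact (hx0D.1 _ (Set.mem_univ _)).1
  have hfeas : FeasRed T φ R I (ext x0) := by
    refine ⟨hx0nn, ?_⟩
    have he : ∑ t ∈ Finset.Icc 1 T, φ (ext x0 t) / R ^ (t - 1) = costX x0 := by
      apply Finset.sum_congr rfl
      intro t ht
      rw [hψeq _ (hx0nn t ht)]
    rw [he]
    exact hx0D.2
  refine ⟨ext x0, hfeas, ?_⟩
  intro w hw
  set xw : Fin (T + 1) → ℝ := fun i => if 1 ≤ (i : ℕ) then w i else 0 with hxw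
  have hwB := feas_bound T R I hR hI φ hφm hφ0 B hB0 hBig w hw
  have hextw : ∀ t ∈ Finset.Icc 1 T, ext xw t = w t := by
    intro t ht
    rw [Finset.mem_Icc] at ht
    rw [hextx xw t (by omega)]
    simp only [hxw]
    rw [if_pos (show 1 ≤ ((⟨t, by omega⟩ : Fin (T+1)) : ℕ) from ht.1)]
  have hxwD : xw ∈ D := by
    constructor
    · intro i _
      simp only [hxw]
      split
      · next h =>
        have hi : (i : ℕ) ∈ Finset.Icc 1 T := by
          rw [Finset.mem_Icc]
          exact ⟨h, by omega⟩
        exact ⟨hw.1 _ hi, hwB _ hi⟩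
      · exact ⟨le_refl _, hB0⟩
    · show costX xw ≤ I
      have he : costX xw = ∑ t ∈ Finset.Icc 1 T, φ (w t) / R ^ (t - 1) := by
        apply Finset.sum_congr rfl
        intro t ht
        rw [hextw t ht, hψeq _ (hw.1 t ht)]
      rw [he]
      exact hw.2
  have hobj : objRed T β δ1 w = objX xw := by
    simp only [hobjX]
    unfold objRed
    congr 1
    · apply Finset.sum_congr rfl
      intro t ht
      rw [Finset.mem_Icc] at ht
      rw [hextw t (by rw [Finset.mem_Icc]; omega)]
    · rw [hextw T (by rw [Finset.mem_Icc]; omega)]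
  rw [hobj]
  exact hx0max hxwD
lemma red_unique (T : ℕ) (hT : 3 ≤ T) (R I : ℝ) (hR : 1 ≤ R) (hI : 0 < I)
    (φ : ℝ → ℝ)
    (hφc : ContinuousOn φ (Set.Ici 0))
    (hφconv : StrictConvexOn ℝ (Set.Ici 0) φ)
    (β δ1 : ℝ)
    (u u' : ℕ → ℝ) (hu : FeasRed T φ R I u) (hu' : FeasRed T φ R I u')
    (hopt : ∀ w : ℕ → ℝ, FeasRed T φ R I w → objRed T β δ1 w ≤ objRed T β δ1 u)
    (heq : objRed T β δ1 u' = objRed T β δ1 u) :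
    ∀ t ∈ Finset.Icc 1 T, u t = u' t := by
  by_contra hc
  push_neg at hc
  obtain ⟨t0, ht0, hne⟩ := hc
  have hR0 : (0 : ℝ) < R := by linarith
  set m : ℕ → ℝ := fun t => (u t + u' t) / 2 with hm
  have hmnn : ∀ t ∈ Finset.Icc 1 T, 0 ≤ m t := by
    intro t ht
    have h1 := hu.1 t ht
    have h2 := hu'.1 t ht
    simp only [hm]
    linarith
  have hconv : ∀ t ∈ Finset.Icc 1 T, φ (m t) ≤ (φ (u t) + φ (u' t)) / 2 := by
    intro t ht
    rcases eq_or_ne (u t) (u' t) with h | h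
    · simp only [hm, h]
      rw [show (u' t + u' t) / 2 = u' t by ring]
      linarith
    · have hcc := hφconv.2 (Set.mem_Ici.mpr (hu.1 t ht)) (Set.mem_Ici.mpr (hu'.1 t ht)) h
        (by norm_num : (0:ℝ) < 1/2) (by norm_num : (0:ℝ) < 1/2) (by norm_num)
      simp only [smul_eq_mul] at hcc
      have he : m t = 1/2 * u t + 1/2 * u' t := by simp only [hm]; ring
      rw [he]
      linarith
  have hstrict : φ (m t0) < (φ (u t0) + φ (u' t0)) / 2 := by
    have hcc := hφconv.2 (Set.mem_Ici.mpr (hu.1 t0 ht0)) (Set.mem_Ici.mpr (hu'.1 t0 ht0)) hne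
      (by norm_num : (0:ℝ) < 1/2) (by norm_num : (0:ℝ) < 1/2) (by norm_num)
    simp only [smul_eq_mul] at hcc
    have he : m t0 = 1/2 * u t0 + 1/2 * u' t0 := by simp only [hm]; ring
    rw [he]
    linarith
  set cm := ∑ t ∈ Finset.Icc 1 T, φ (m t) / R ^ (t - 1) with hcm
  have hcost : cm < I := by
    have h1 : cm < ∑ t ∈ Finset.Icc 1 T, ((φ (u t) + φ (u' t)) / 2) / R ^ (t - 1) := by
      apply Finset.sum_lt_sum
      · intro t ht
        rw [div_eq_mul_inv, div_eq_mul_inv]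
        exact mul_le_mul_of_nonneg_right (hconv t ht)
          (le_of_lt (inv_pos.mpr (pow_pos hR0 _)))
      · refine ⟨t0, ht0, ?_⟩
        rw [div_eq_mul_inv, div_eq_mul_inv]
        exact mul_lt_mul_of_pos_right hstrict (inv_pos.mpr (pow_pos hR0 _))
    have h2 : ∑ t ∈ Finset.Icc 1 T, ((φ (u t) + φ (u' t)) / 2) / R ^ (t - 1)
        = (∑ t ∈ Finset.Icc 1 T, φ (u t) / R ^ (t - 1)
            + ∑ t ∈ Finset.Icc 1 T, φ (u' t) / R ^ (t - 1)) / 2 := by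
      rw [← Finset.sum_add_distrib, Finset.sum_div]
      apply Finset.sum_congr rfl
      intro t _
      ring
    have h3 := hu.2
    have h4 := hu'.2
    rw [h2] at h1
    linarith
  have hobjm : objRed T β δ1 m = (objRed T β δ1 u + objRed T β δ1 u') / 2 := by
    unfold objRed
    have e : ∑ t ∈ Finset.Icc 1 (T - 1), β ^ (t - 1) * m t
        = (∑ t ∈ Finset.Icc 1 (T - 1), β ^ (t - 1) * u t
            + ∑ t ∈ Finset.Icc 1 (T - 1), β ^ (t - 1) * u' t) / 2 := by
      rw [← Finset.sum_add_distrib, Finset.sum_div]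
      apply Finset.sum_congr rfl
      intro t _
      simp only [hm]
      ring
    rw [e]
    simp only [hm]
    ring
  -- perturb m upwards in coordinate 1
  have hm1nn : 0 ≤ m 1 := hmnn 1 (by rw [Finset.mem_Icc]; omega)
  have hcw : ContinuousWithinAt φ (Set.Ici 0) (m 1) := hφc _ hm1nn
  have htd : Filter.Tendsto (fun ε : ℝ => m 1 + ε) (nhdsWithin 0 (Set.Ioi 0))
      (nhdsWithin (m 1) (Set.Ici 0)) := by
    rw [tendsto_nhdsWithin_iff]
    constructor
    · have h : Filter.Tendsto (fun ε : ℝ => m 1 + ε) (nhds 0) (nhds (m 1)) := by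
        have hc : Continuous (fun ε : ℝ => m 1 + ε) := continuous_const.add continuous_id
        simpa using hc.tendsto (0:ℝ)
      exact h.mono_left nhdsWithin_le_nhds
    · apply Filter.eventually_of_mem self_mem_nhdsWithin
      intro ε hε
      have : (0:ℝ) < ε := hε
      exact Set.mem_Ici.mpr (by linarith)
  have tphi : Filter.Tendsto (fun ε : ℝ => φ (m 1 + ε)) (nhdsWithin 0 (Set.Ioi 0))
      (nhds (φ (m 1))) := hcw.tendsto.comp htd
  have hev : ∀ᶠ ε in nhdsWithin 0 (Set.Ioi (0:ℝ)), φ (m 1 + ε) < φ (m 1) + (I - cm) :=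
    tphi.eventually_lt_const (by linarith)
  obtain ⟨ε, hεlt, hεpos⟩ := (hev.and eventually_mem_nhdsWithin).exists
  have hεpos' : (0:ℝ) < ε := hεpos
  set w : ℕ → ℝ := Function.update m 1 (m 1 + ε) with hw
  have hw1 : w 1 = m 1 + ε := Function.update_self _ _ _
  have hwt : ∀ t : ℕ, t ≠ 1 → w t = m t := fun t ht => Function.update_of_ne ht _ _
  have hmem1 : (1:ℕ) ∈ Finset.Icc 1 T := by rw [Finset.mem_Icc]; omega
  have hsplit : ∀ v : ℕ → ℝ, ∑ t ∈ Finset.Icc 1 T, φ (v t) / R ^ (t - 1)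
      = φ (v 1) + ∑ t ∈ (Finset.Icc 1 T).erase 1, φ (v t) / R ^ (t - 1) := by
    intro v
    rw [← Finset.add_sum_erase _ _ hmem1]
    norm_num
  have hrest : ∑ t ∈ (Finset.Icc 1 T).erase 1, φ (w t) / R ^ (t - 1)
      = ∑ t ∈ (Finset.Icc 1 T).erase 1, φ (m t) / R ^ (t - 1) := by
    apply Finset.sum_congr rfl
    intro t ht
    rw [hwt t (Finset.ne_of_mem_erase ht)]
  have hwfeas : FeasRed T φ R I w := by
    constructor
    · intro t ht
      rcases eq_or_ne t 1 with h | h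
      · rw [h, hw1]; linarith
      · rw [hwt t h]; exact hmnn t ht
    · have e1 := hsplit w
      have e2 := hsplit m
      rw [e1, hrest, hw1]
      linarith [e2]
  have hwobj : objRed T β δ1 w = objRed T β δ1 m + ε := by
    unfold objRed
    have hmem1' : (1:ℕ) ∈ Finset.Icc 1 (T - 1) := by rw [Finset.mem_Icc]; omega
    have hs : ∀ v : ℕ → ℝ, ∑ t ∈ Finset.Icc 1 (T - 1), β ^ (t - 1) * v t
        = β ^ (1 - 1 : ℕ) * v 1 + ∑ t ∈ (Finset.Icc 1 (T - 1)).erase 1, β ^ (t - 1) * v t := by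
      intro v; rw [← Finset.add_sum_erase _ _ hmem1']
    rw [hs w, hs m]
    have hr : ∑ t ∈ (Finset.Icc 1 (T - 1)).erase 1, β ^ (t - 1) * w t
        = ∑ t ∈ (Finset.Icc 1 (T - 1)).erase 1, β ^ (t - 1) * m t :=
      Finset.sum_congr rfl fun t ht => by rw [hwt t (Finset.ne_of_mem_erase ht)]
    rw [hr, hw1, hwt T (by omega)]
    norm_num
    ring
  have hfin := hopt w hwfeas
  rw [hwobj, hobjm, heq] at hfin
  linarith
def lowBefore (T : ℕ) (t : ℕ) (ω : Fin (T - 2) → Fin 2) : Prop :=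
  ∀ s : Fin (T - 2), (s : ℕ) + 2 < t → ω s = 0

def lowUpto (T : ℕ) (t : ℕ) (ω : Fin (T - 2) → Fin 2) : Prop :=
  ∀ s : Fin (T - 2), (s : ℕ) + 2 ≤ t → ω s = 0

instance (T t : ℕ) (ω : Fin (T - 2) → Fin 2) : Decidable (lowBefore T t ω) := by
  unfold lowBefore; infer_instance

instance (T t : ℕ) (ω : Fin (T - 2) → Fin 2) : Decidable (lowUpto T t ω) := by
  unfold lowUpto; infer_instance

noncomputable def Vu (T : ℕ) (β a : ℝ) (u : ℕ → ℝ) : ℕ → ℝ :=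
  GS T β (fun τ => a * u τ) (u T)

noncomputable def Puv (T : ℕ) (δ1 β a : ℝ) (u : ℕ → ℝ) :
    ℕ → (Fin (T - 2) → Fin 2) → ℝ := fun t ω =>
  if 1 ≤ t ∧ t ≤ T then
    (if lowBefore T t ω then
      (if lowUpto T (min t (T - 1)) ω then u t else 0)
    else if lowBefore T (t - 1) ω then (u (t - 1) + δ1 * Vu T β a u t) / δ1
    else 0)
  else 0

noncomputable def Pu (T : ℕ) (δ1 β a : ℝ) (u : ℕ → ℝ) : PolicyIV T 2 where
  v := Puv T δ1 β a u
  adapted := by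
    intro t ht ω ω' h
    unfold Puv
    have key : ∀ k, k ≤ t → (lowBefore T k ω ↔ lowBefore T k ω') := by
      intro k hk
      unfold lowBefore
      constructor <;> intro hh s hs
      · rw [← h s (by omega)]; exact hh s hs
      · rw [h s (by omega)]; exact hh s hs
    have key2 : lowUpto T (min t (T - 1)) ω ↔ lowUpto T (min t (T - 1)) ω' := by
      unfold lowUpto
      constructor <;> intro hh s hs
      · rw [← h s (by omega)]; exact hh s hs
      · rw [h s (by omega)]; exact hh s hs
    exact if_congr Iff.rfl
      (if_congr (key t le_rfl) (if_congr key2 rfl rfl)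
        (if_congr (key (t - 1) (by omega)) rfl rfl)) rfl

lemma lowBefore_zero (T t : ℕ) : lowBefore T t (fun _ => 0) := fun _ _ => rfl
lemma lowUpto_zero (T t : ℕ) : lowUpto T t (fun _ => 0) := fun _ _ => rfl

lemma fin2_cases (i : Fin 2) : i = 0 ∨ i = 1 := by omega

lemma lowUpto_iff (T t : ℕ) (h2 : 2 ≤ t) (hj : t - 2 < T - 2) (ω : Fin (T - 2) → Fin 2) :
    lowUpto T t ω ↔ lowBefore T t ω ∧ ω ⟨t - 2, hj⟩ = 0 := by
  constructor
  · intro h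
    exact ⟨fun s hs => h s (by omega), h ⟨t - 2, hj⟩ (by simp; omega)⟩
  · rintro ⟨h1, h2'⟩ s hs
    rcases eq_or_lt_of_le hs with h | h
    · have : s = ⟨t - 2, hj⟩ := by apply Fin.ext; simp; omega
      rw [this]; exact h2'
    · exact h1 s (by omega)

lemma Puv_all_low (T : ℕ) (hT : 3 ≤ T) (δ1 β a : ℝ) (u : ℕ → ℝ) (t : ℕ)
    (h1 : 1 ≤ t) (h2 : t ≤ T) (ω : Fin (T - 2) → Fin 2)
    (hlow : lowUpto T (min t (T - 1)) ω) (hlb : lowBefore T t ω) :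
    Puv T δ1 β a u t ω = u t := by
  unfold Puv
  rw [if_pos ⟨h1, h2⟩, if_pos hlb, if_pos hlow]
section CAPU
variable (T : ℕ) (δ1 δ2 q1 q2 β a : ℝ) (u : ℕ → ℝ)

lemma Vu_rec (hT : 3 ≤ T) (t : ℕ) (h : t ≤ T - 1) :
    Vu T β a u t = a * u t + β * Vu T β a u (t + 1) :=
  GS_rec T β (fun τ => a * u τ) (u T) t h hT

lemma Vu_last (hT : 3 ≤ T) : Vu T β a u T = u T := by
  unfold Vu GS
  rw [Finset.Icc_eq_empty (by omega), Finset.sum_empty, Nat.sub_self, pow_zero]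
  ring

lemma mix_algebra (hδ1 : 0 < δ1) (hqsum : q1 + q2 = 1) (hβ : β = q1 * δ1 + q2 * δ2)
    (ha : a = β / δ1) (x y : ℝ) :
    q1 * (x + δ1 * y) + q2 * (0 + δ2 * ((x + δ1 * y) / δ1)) = a * x + β * y := by
  have hδ1' : δ1 ≠ 0 := ne_of_gt hδ1
  rw [ha, hβ]
  field_simp
  ring

lemma contA_Pu (hT : 3 ≤ T) (hδ1 : 0 < δ1) (hqsum : q1 + q2 = 1)
    (hβ : β = q1 * δ1 + q2 * δ2) (ha : a = β / δ1) :
    ∀ n t, 1 ≤ t → t ≤ T - 1 → T - 1 - t = n → ∀ ω : Fin (T - 2) → Fin 2,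
      (lowUpto T t ω →
        contA T 2 ![δ1, δ2] ![q1, q2] (Pu T δ1 β a u).v t ω = Vu T β a u (t + 1)) ∧
      (lowBefore T t ω → ¬ lowUpto T t ω →
        contA T 2 ![δ1, δ2] ![q1, q2] (Pu T δ1 β a u).v t ω
          = (u t + δ1 * Vu T β a u (t + 1)) / δ1) ∧
      (¬ lowBefore T t ω →
        contA T 2 ![δ1, δ2] ![q1, q2] (Pu T δ1 β a u).v t ω = 0) := by
  have hq01 : (![q1, q2] : Fin 2 → ℝ) 0 + (![q1, q2] : Fin 2 → ℝ) 1 = 1 := by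
    simpa using hqsum
  intro n
  induction n with
  | zero =>
    intro t h1 h2 hn ω
    have ht : t = T - 1 := by omega
    subst ht
    have hlast := contA_last ![δ1, δ2] ![q1, q2] (Pu T δ1 β a u) hT hq01 ω
    have hTT : T - 1 + 1 = T := by omega
    refine ⟨?_, ?_, ?_⟩
    · intro hlow
      rw [hlast, hTT]
      show Puv T δ1 β a u T ω = Vu T β a u T
      rw [Vu_last T β a u hT]
      apply Puv_all_low T hT _ _ _ _ T (by omega) le_rfl
      · rw [show min T (T - 1) = T - 1 by omega]
        exact hlow
      · intro s hs
        exact hlow s (by omega)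
    · intro hlb hnl
      rw [hlast]
      show Puv T δ1 β a u T ω = (u (T - 1) + δ1 * Vu T β a u (T - 1 + 1)) / δ1
      rw [hTT]
      unfold Puv
      have hA : ¬ lowBefore T T ω := fun hlb' => hnl (fun s hs => hlb' s (by omega))
      have hB : lowBefore T (T - 1) ω := hlb
      rw [if_pos ⟨by omega, le_rfl⟩, if_neg hA, if_pos hB]
    · intro hnlb
      rw [hlast]
      show Puv T δ1 β a u T ω = 0
      unfold Puv
      have hA : ¬ lowBefore T T ω := fun hlb' => hnlb (fun s hs => hlb' s (by omega))
      rw [if_pos ⟨by omega, le_rfl⟩, if_neg hA, if_neg hnlb]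
  | succ n ih =>
    intro t h1 h2 hn ω
    have h2' : t + 1 ≤ T - 1 := by omega
    have hrec := contA_rec ![δ1, δ2] ![q1, q2] (Pu T δ1 β a u) hT hq01 (t + 1)
      (by omega) h2' ω
    have ht1 : t + 1 - 1 = t := by omega
    rw [ht1] at hrec
    set j : Fin (T - 2) := ⟨t + 1 - 2, by omega⟩ with hjdef
    have hjval : (j : ℕ) = t - 1 := by rw [hjdef]; show t + 1 - 2 = t - 1; omega
    have hjval2 : (j : ℕ) + 2 = t + 1 := by omega
    -- hrec : contA t ω = ∑ i, q i * (v (t+1) (update ω j i) + δ i * contA (t+1) (update ω j i))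
    refine ⟨?_, ?_, ?_⟩
    · -- all low up to t
      intro hlow
      have hup0 : lowUpto T (t + 1) (Function.update ω j 0) := by
        intro s hs
        rcases eq_or_ne s j with h | h
        · rw [h, Function.update_self]
        · rw [Function.update_of_ne h]
          apply hlow
          have : (s : ℕ) ≠ t - 1 := fun hc => h (Fin.ext (by rw [hjval]; exact hc))
          omega
      have hlb1 : lowBefore T (t + 1) (Function.update ω j 1) := by
        intro s hs
        have h : s ≠ j := fun hc => by
          rw [hc, hjval2] at hs; omega
        rw [Function.update_of_ne h]
        apply hlow
        omega
      have hnl1 : ¬ lowUpto T (t + 1) (Function.update ω j 1) := by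
        intro hc
        have := hc j (by omega)
        rw [Function.update_self] at this
        exact absurd this (by decide)
      have hv0 : Puv T δ1 β a u (t + 1) (Function.update ω j 0) = u (t + 1) := by
        apply Puv_all_low T hT _ _ _ _ (t + 1) (by omega) (by omega)
        · rw [show min (t + 1) (T - 1) = t + 1 by omega]
          exact hup0
        · intro s hs; exact hup0 s (by omega)
      have hv1 : Puv T δ1 β a u (t + 1) (Function.update ω j 1) = 0 := by
        unfold Puv
        rw [if_pos ⟨by omega, by omega⟩, if_pos hlb1, if_neg]
        rw [show min (t + 1) (T - 1) = t + 1 by omega]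
        exact hnl1
      have hc0 := (ih (t + 1) (by omega) h2' (by omega) (Function.update ω j 0)).1 hup0
      have hc1 := ((ih (t + 1) (by omega) h2' (by omega) (Function.update ω j 1)).2.1) hlb1 hnl1
      rw [hrec, Fin.sum_univ_two]
      show (![q1, q2] 0) * (Puv T δ1 β a u (t+1) _ + (![δ1, δ2] 0) * _)
        + (![q1, q2] 1) * (Puv T δ1 β a u (t+1) _ + (![δ1, δ2] 1) * _) = _
      rw [hv0, hv1]
      rw [show ((![q1, q2] : Fin 2 → ℝ) 0) = q1 from rfl,
          show ((![q1, q2] : Fin 2 → ℝ) 1) = q2 from rfl,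
          show ((![δ1, δ2] : Fin 2 → ℝ) 0) = δ1 from rfl,
          show ((![δ1, δ2] : Fin 2 → ℝ) 1) = δ2 from rfl]
      rw [hc0, hc1]
      rw [Vu_rec T β a u hT (t + 1) h2']
      exact mix_algebra δ1 δ2 q1 q2 β a hδ1 hqsum hβ ha (u (t + 1)) (Vu T β a u (t + 1 + 1))
    · -- low before t, high at t
      intro hlb hnl
      have hex : ∃ s0 : Fin (T - 2), (s0 : ℕ) + 2 = t ∧ ω s0 ≠ 0 := by
        by_contra hc
        push_neg at hc
        apply hnl
        intro s hs
        rcases eq_or_lt_of_le hs with h | h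
        · exact hc s h
        · exact hlb s h
      obtain ⟨s0, hs0t, hs0ne⟩ := hex
      have hs0j : s0 ≠ j := fun hc => by rw [hc, hjval2] at hs0t; omega
      have key : ∀ i : Fin 2, ¬ lowBefore T (t + 1) (Function.update ω j i) := by
        intro i hc
        have := hc s0 (by omega)
        rw [Function.update_of_ne hs0j] at this
        exact hs0ne this
      have keyb : ∀ i : Fin 2, lowBefore T t (Function.update ω j i) := by
        intro i s hs
        have h : s ≠ j := fun hc => by
          rw [hc, hjval2] at hs; omega
        rw [Function.update_of_ne h]
        exact hlb s hs
      have hv : ∀ i : Fin 2, Puv T δ1 β a u (t + 1) (Function.update ω j i)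
          = (u t + δ1 * Vu T β a u (t + 1)) / δ1 := by
        intro i
        unfold Puv
        rw [if_pos ⟨by omega, by omega⟩, if_neg (key i), if_pos]
        · rw [show t + 1 - 1 = t by omega]
        · rw [show t + 1 - 1 = t by omega]
          exact keyb i
      have hca : ∀ i : Fin 2, contA T 2 ![δ1, δ2] ![q1, q2] (Pu T δ1 β a u).v (t + 1)
          (Function.update ω j i) = 0 := by
        intro i
        exact (ih (t + 1) (by omega) h2' (by omega) (Function.update ω j i)).2.2 (key i)
      rw [hrec, Fin.sum_univ_two]
      show (![q1, q2] 0) * (Puv T δ1 β a u (t+1) _ + (![δ1, δ2] 0) * _)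
        + (![q1, q2] 1) * (Puv T δ1 β a u (t+1) _ + (![δ1, δ2] 1) * _) = _
      rw [hv 0, hv 1, hca 0, hca 1]
      rw [show ((![q1, q2] : Fin 2 → ℝ) 0) = q1 from rfl,
          show ((![q1, q2] : Fin 2 → ℝ) 1) = q2 from rfl]
      have : q1 * ((u t + δ1 * Vu T β a u (t + 1)) / δ1 + ![δ1, δ2] 0 * 0)
          + q2 * ((u t + δ1 * Vu T β a u (t + 1)) / δ1 + ![δ1, δ2] 1 * 0)
          = (q1 + q2) * ((u t + δ1 * Vu T β a u (t + 1)) / δ1) := by ring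
      rw [this, hqsum, one_mul]
    · -- high before t
      intro hnlb
      have hex : ∃ s0 : Fin (T - 2), (s0 : ℕ) + 2 < t ∧ ω s0 ≠ 0 := by
        by_contra hc
        push_neg at hc
        exact hnlb (fun s hs => hc s hs)
      obtain ⟨s0, hs0t, hs0ne⟩ := hex
      have hs0j : s0 ≠ j := fun hc => by rw [hc, hjval2] at hs0t; omega
      have key : ∀ i : Fin 2, ¬ lowBefore T (t + 1) (Function.update ω j i) := by
        intro i hc
        have := hc s0 (by omega)
        rw [Function.update_of_ne hs0j] at this
        exact hs0ne this
      have keyb : ∀ i : Fin 2, ¬ lowBefore T t (Function.update ω j i) := by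
        intro i hc
        have := hc s0 (by omega)
        rw [Function.update_of_ne hs0j] at this
        exact hs0ne this
      have hv : ∀ i : Fin 2, Puv T δ1 β a u (t + 1) (Function.update ω j i) = 0 := by
        intro i
        unfold Puv
        rw [if_pos ⟨by omega, by omega⟩, if_neg (key i), if_neg]
        rw [show t + 1 - 1 = t by omega]
        exact keyb i
      have hca : ∀ i : Fin 2, contA T 2 ![δ1, δ2] ![q1, q2] (Pu T δ1 β a u).v (t + 1)
          (Function.update ω j i) = 0 := by
        intro i
        exact (ih (t + 1) (by omega) h2' (by omega) (Function.update ω j i)).2.2 (key i)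
      rw [hrec, Fin.sum_univ_two]
      show (![q1, q2] 0) * (Puv T δ1 β a u (t+1) _ + (![δ1, δ2] 0) * _)
        + (![q1, q2] 1) * (Puv T δ1 β a u (t+1) _ + (![δ1, δ2] 1) * _) = 0
      rw [hv 0, hv 1, hca 0, hca 1]
      ring
end CAPU
section FEAS
variable (T : ℕ) (δ1 δ2 q1 q2 β a : ℝ) (u : ℕ → ℝ) (φ : ℝ → ℝ) (R I : ℝ)

lemma GS_last (hT : 3 ≤ T) (w : ℕ → ℝ) (c : ℝ) : GS T β w c T = c := by
  unfold GS
  rw [Finset.Icc_eq_empty (by omega), Finset.sum_empty, Nat.sub_self, pow_zero]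
  ring

lemma Pu_nonneg (hT : 3 ≤ T) (hδ1 : 0 < δ1) (hβ0 : 0 ≤ β) (ha0 : 0 ≤ a)
    (hfeas : FeasRed T φ R I u) :
    ∀ t ∈ Finset.Icc 1 T, ∀ ω, 0 ≤ (Pu T δ1 β a u).v t ω := by
  intro t ht ω
  rw [Finset.mem_Icc] at ht
  show 0 ≤ Puv T δ1 β a u t ω
  unfold Puv
  rw [if_pos ht]
  split_ifs with h1 h2 h3
  · exact hfeas.1 t (by rw [Finset.mem_Icc]; omega)
  · exact le_refl 0
  · have h3' : 3 ≤ t := by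
      unfold lowBefore at h1
      push_neg at h1
      obtain ⟨s, hs, _⟩ := h1
      omega
    have hVu : 0 ≤ Vu T β a u t := by
      apply GS_nonneg T β hβ0 _ _ t
      · intro τ hτ
        rw [Finset.mem_Icc] at hτ
        exact mul_nonneg ha0 (hfeas.1 τ (by rw [Finset.mem_Icc]; omega))
      · exact hfeas.1 T (by rw [Finset.mem_Icc]; omega)
    have hu1 : 0 ≤ u (t - 1) := hfeas.1 (t - 1) (by rw [Finset.mem_Icc]; omega)
    apply div_nonneg _ (le_of_lt hδ1)
    nlinarith
  · exact le_refl 0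

lemma Pu_cost (hT : 3 ≤ T) (hfeas : FeasRed T φ R I u) :
    costII T φ R (Pu T δ1 β a u) ≤ I := by
  unfold costII
  have he : ∀ t ∈ Finset.Icc 1 T,
      φ ((Pu T δ1 β a u).v t (fun _ => 0)) / R ^ (t - 1) = φ (u t) / R ^ (t - 1) := by
    intro t ht
    rw [Finset.mem_Icc] at ht
    have : (Pu T δ1 β a u).v t (fun _ => 0) = u t :=
      Puv_all_low T hT δ1 β a u t ht.1 ht.2 _ (lowUpto_zero T _) (lowBefore_zero T _)
    rw [this]
  rw [Finset.sum_congr rfl he]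
  exact hfeas.2

lemma Pu_IC (hT : 3 ≤ T) (hδ1 : 0 < δ1) (hδ12 : δ1 < δ2) (hqsum : q1 + q2 = 1)
    (hβ : β = q1 * δ1 + q2 * δ2) (ha : a = β / δ1)
    (hfeas : FeasRed T φ R I u) :
    ICIV T 2 ![δ1, δ2] ![q1, q2] (Pu T δ1 β a u) := by
  intro t h2 htT ω ω' hagree
  have hδ1' : δ1 ≠ 0 := ne_of_gt hδ1
  set j : Fin (T - 2) := ⟨t - 2, by omega⟩ with hjdef
  have hjval2 : (j : ℕ) + 2 = t := by rw [hjdef]; show t - 2 + 2 = t; omega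
  have hdel : deltaAt T 2 ![δ1, δ2] t ω = ![δ1, δ2] (ω j) :=
    deltaAt_eval ![δ1, δ2] hT t h2 htT ω
  have CP := contA_Pu T δ1 δ2 q1 q2 β a u hT hδ1 hqsum hβ ha (T - 1 - t) t (by omega) htT rfl
  by_cases hlb : lowBefore T t ω
  · have hlb' : lowBefore T t ω' := fun s hs => by rw [← hagree s hs]; exact hlb s hs
    set V := Vu T β a u (t + 1) with hV
    have eval : ∀ x : Fin (T - 2) → Fin 2, lowBefore T t x →
        ((x j = 0 → Puv T δ1 β a u t x = u t
            ∧ contA T 2 ![δ1, δ2] ![q1, q2] (Pu T δ1 β a u).v t x = V)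
         ∧ (x j = 1 → Puv T δ1 β a u t x = 0
            ∧ contA T 2 ![δ1, δ2] ![q1, q2] (Pu T δ1 β a u).v t x
                = (u t + δ1 * V) / δ1)) := by
      intro x hx
      have CPx := contA_Pu T δ1 δ2 q1 q2 β a u hT hδ1 hqsum hβ ha (T - 1 - t) t
        (by omega) htT rfl x
      constructor
      · intro hx0
        have hup : lowUpto T t x := (lowUpto_iff T t h2 (by omega) x).2 ⟨hx, hx0⟩
        constructor
        · apply Puv_all_low T hT δ1 β a u t (by omega) (by omega)
          · rw [show min t (T - 1) = t by omega]; exact hup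
          · exact hx
        · exact CPx.1 hup
      · intro hx1
        have hnup : ¬ lowUpto T t x := by
          intro hc
          have := (lowUpto_iff T t h2 (by omega) x).1 hc
          rw [hx1] at this
          exact absurd this.2 (by decide)
        constructor
        · unfold Puv
          rw [if_pos ⟨by omega, by omega⟩, if_pos hx, if_neg]
          rw [show min t (T - 1) = t by omega]
          exact hnup
        · exact CPx.2.1 hx hnup
    have hut : 0 ≤ u t := hfeas.1 t (by rw [Finset.mem_Icc]; omega)
    show Puv T δ1 β a u t ω' + _ * contA _ 2 _ _ _ t ω'
        ≤ Puv T δ1 β a u t ω + _ * contA _ 2 _ _ _ t ω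
    rw [hdel]
    rcases fin2_cases (ω j) with h | h <;> rcases fin2_cases (ω' j) with h' | h'
    · rw [h]
      rw [((eval ω hlb).1 h).1, ((eval ω hlb).1 h).2,
          ((eval ω' hlb').1 h').1, ((eval ω' hlb').1 h').2]
    · rw [h]
      rw [((eval ω hlb).1 h).1, ((eval ω hlb).1 h).2,
          ((eval ω' hlb').2 h').1, ((eval ω' hlb').2 h').2]
      have e : (![δ1, δ2] : Fin 2 → ℝ) 0 = δ1 := rfl
      rw [e]
      have e2 : δ1 * ((u t + δ1 * V) / δ1) = u t + δ1 * V := by field_simp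
      rw [e2, zero_add]
    · rw [h]
      rw [((eval ω hlb).2 h).1, ((eval ω hlb).2 h).2,
          ((eval ω' hlb').1 h').1, ((eval ω' hlb').1 h').2]
      have e : (![δ1, δ2] : Fin 2 → ℝ) 1 = δ2 := rfl
      rw [e, zero_add]
      have e2 : δ2 * ((u t + δ1 * V) / δ1) = δ2 * u t / δ1 + δ2 * V := by
        field_simp
      rw [e2]
      have e3 : u t ≤ δ2 * u t / δ1 := by
        rw [le_div_iff₀ hδ1]
        nlinarith
      linarith
    · rw [h]
      rw [((eval ω hlb).2 h).1, ((eval ω hlb).2 h).2,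
          ((eval ω' hlb').2 h').1, ((eval ω' hlb').2 h').2]
  · have hlb' : ¬ lowBefore T t ω' := fun hc => hlb (fun s hs => by
      rw [hagree s hs]; exact hc s hs)
    have hc0 := (CP ω).2.2 hlb
    have CP' := contA_Pu T δ1 δ2 q1 q2 β a u hT hδ1 hqsum hβ ha (T - 1 - t) t
      (by omega) htT rfl ω'
    have hc0' := CP'.2.2 hlb'
    show Puv T δ1 β a u t ω' + _ * contA _ 2 _ _ _ t ω'
        ≤ Puv T δ1 β a u t ω + _ * contA _ 2 _ _ _ t ω
    rw [hc0, hc0']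
    have hv : Puv T δ1 β a u t ω' = Puv T δ1 β a u t ω := by
      unfold Puv
      rw [if_neg hlb', if_neg hlb]
      apply if_congr Iff.rfl _ rfl
      apply if_congr _ rfl rfl
      unfold lowBefore
      constructor <;> intro hh s hs
      · rw [hagree s (by omega)]; exact hh s hs
      · rw [← hagree s (by omega)]; exact hh s hs
    rw [hv]

lemma Pu_payoff (hT : 3 ≤ T) (hδ1 : 0 < δ1) (hqsum : q1 + q2 = 1)
    (hβ : β = q1 * δ1 + q2 * δ2) (ha : a = β / δ1) :
    payoffIV T 2 ![δ1, δ2] ![q1, q2] δ1 (Pu T δ1 β a u) = objRed T β δ1 u := by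
  have hδ1' : δ1 ≠ 0 := ne_of_gt hδ1
  have hq01 : (![q1, q2] : Fin 2 → ℝ) 0 + (![q1, q2] : Fin 2 → ℝ) 1 = 1 := by simpa using hqsum
  rw [payoff_eq ![δ1, δ2] ![q1, q2] (Pu T δ1 β a u) hT hq01 δ1 (fun _ => 0)]
  have hv1 : (Pu T δ1 β a u).v 1 (fun _ => 0) = u 1 :=
    Puv_all_low T hT δ1 β a u 1 le_rfl (by omega) _ (lowUpto_zero T _) (lowBefore_zero T _)
  have hc1 : contA T 2 ![δ1, δ2] ![q1, q2] (Pu T δ1 β a u).v 1 (fun _ => 0)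
      = Vu T β a u 2 :=
    (contA_Pu T δ1 δ2 q1 q2 β a u hT hδ1 hqsum hβ ha (T - 1 - 1) 1 le_rfl (by omega) rfl
      (fun _ => 0)).1 (lowUpto_zero T _)
  rw [hv1, hc1]
  have eA : δ1 * a = β := by rw [ha]; field_simp
  have key := GS_to_obj T hT β δ1 a 0 eA u (fun _ => 0)
  have e1 : (fun τ : ℕ => a * u τ - 0 * (fun _ : ℕ => (0:ℝ)) τ) = (fun τ => a * u τ) := by
    funext τ; simp
  have e2 : ∑ τ ∈ Finset.Icc 2 (T - 1), β ^ (τ - 2) * (δ1 * 0) * (fun _ : ℕ => (0:ℝ)) τ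
      = 0 := Finset.sum_eq_zero (fun τ _ => by simp)
  rw [e1, e2, sub_zero] at key
  exact key
end FEAS
section BOUND
variable (T : ℕ) (δ1 δ2 q1 q2 β : ℝ)

lemma payoff_bound (hT : 3 ≤ T) (hδ1 : 0 < δ1) (hδ12 : δ1 < δ2)
    (hq1 : 0 < q1) (hq2 : 0 < q2) (hqsum : q1 + q2 = 1) (hβ : β = q1 * δ1 + q2 * δ2)
    (P : PolicyIV T 2)
    (hnn : ∀ t ∈ Finset.Icc 1 T, ∀ ω, 0 ≤ P.v t ω)
    (hIC : ICIV T 2 ![δ1, δ2] ![q1, q2] P) :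
    payoffIV T 2 ![δ1, δ2] ![q1, q2] δ1 P
      + ∑ τ ∈ Finset.Icc 2 (T - 1), β ^ (τ - 2) * (q2 * (δ2 - δ1))
          * P.v τ (fun s => if (s : ℕ) + 2 = τ then 1 else 0)
    ≤ objRed T β δ1 (fun t => P.v t (fun _ => 0)) := by
  have hδ1' : δ1 ≠ 0 := ne_of_gt hδ1
  have hβ0 : 0 < β := by nlinarith
  have hq01 : (![q1, q2] : Fin 2 → ℝ) 0 + (![q1, q2] : Fin 2 → ℝ) 1 = 1 := by simpa using hqsum
  set A : ℝ := β / δ1 with hA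
  set KK : ℝ := q2 * (δ2 - δ1) / δ1 with hKK
  have eA : δ1 * A = β := by rw [hA]; field_simp
  have eK : δ1 * KK = q2 * (δ2 - δ1) := by rw [hKK]; field_simp
  set vL : ℕ → ℝ := fun t => P.v t (fun _ => 0) with hvL
  set hp : ℕ → (Fin (T - 2) → Fin 2) :=
    fun τ => (fun s => if (s : ℕ) + 2 = τ then 1 else 0) with hhp
  set vh : ℕ → ℝ := fun τ => P.v τ (hp τ) with hvh
  set G : ℕ → ℝ := GS T β (fun τ => A * vL τ - KK * vh τ) (vL T) with hG
  have claim : ∀ n t, 2 ≤ t → t ≤ T → T - t = n →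
      contA T 2 ![δ1, δ2] ![q1, q2] P.v (t - 1) (fun _ => 0) ≤ G t := by
    intro n
    induction n with
    | zero =>
      intro t h2 hle hn
      have ht : t = T := by omega
      rw [ht, contA_last ![δ1, δ2] ![q1, q2] P hT hq01, hG, GS_last T β hT]
    | succ n ih =>
      intro t h2 hle hn
      have htT : t ≤ T - 1 := by omega
      have hrec := contA_rec ![δ1, δ2] ![q1, q2] P hT hq01 t h2 htT (fun _ => 0)
      set j : Fin (T - 2) := ⟨t - 2, by omega⟩ with hjdef
      have hjval2 : (j : ℕ) + 2 = t := by rw [hjdef]; show t - 2 + 2 = t; omega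
      have e0 : Function.update (fun _ : Fin (T - 2) => (0 : Fin 2)) j 0
          = (fun _ => 0) := by
        funext s
        rw [Function.update_apply]
        split <;> rfl
      have e1 : Function.update (fun _ : Fin (T - 2) => (0 : Fin 2)) j 1 = hp t := by
        funext s
        rw [Function.update_apply]
        simp only [hhp]
        rcases eq_or_ne s j with h | h
        · rw [if_pos h, if_pos (by rw [h]; exact hjval2)]
        · rw [if_neg h, if_neg (fun hc => h (Fin.ext (show (s:ℕ) = t - 2 by omega)))]
      have hICt := hIC t h2 htT (fun _ => 0) (hp t)
        (fun s hs => by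
          rw [hhp]
          show (0 : Fin 2) = if (s : ℕ) + 2 = t then 1 else 0
          rw [if_neg (by omega)])
      have hdel : deltaAt T 2 ![δ1, δ2] t (fun _ => 0) = δ1 := by
        rw [deltaAt_eval ![δ1, δ2] hT t h2 htT]
        rfl
      rw [hdel] at hICt
      have hIH : contA T 2 ![δ1, δ2] ![q1, q2] P.v t (fun _ => 0) ≤ G (t + 1) := by
        have := ih (t + 1) (by omega) (by omega) (by omega)
        rw [show t + 1 - 1 = t from rfl] at this
        exact this
      rw [hrec, Fin.sum_univ_two, e0, e1]
      set C := contA T 2 ![δ1, δ2] ![q1, q2] P.v t (fun _ => 0) with hC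
      set ch := contA T 2 ![δ1, δ2] ![q1, q2] P.v t (hp t) with hch
      have hGrec : G t = (A * vL t - KK * vh t) + β * G (t + 1) :=
        GS_rec T β _ _ t htT hT
      rw [hGrec]
      show (![q1, q2] : Fin 2 → ℝ) 0 * (P.v t (fun _ => 0) + ![δ1, δ2] 0 * C)
          + (![q1, q2] : Fin 2 → ℝ) 1 * (P.v t (hp t) + ![δ1, δ2] 1 * ch) ≤ _
      rw [show ((![q1, q2] : Fin 2 → ℝ) 0) = q1 from rfl,
          show ((![q1, q2] : Fin 2 → ℝ) 1) = q2 from rfl,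
          show ((![δ1, δ2] : Fin 2 → ℝ) 0) = δ1 from rfl,
          show ((![δ1, δ2] : Fin 2 → ℝ) 1) = δ2 from rfl]
      -- hICt : vh t + δ1 * ch ≤ vL t + δ1 * C
      have hX : P.v t (fun _ => 0) = vL t := rfl
      have hY : P.v t (hp t) = vh t := rfl
      rw [hX, hY]
      rw [← mul_le_mul_iff_right₀ hδ1]
      have h1 : q2 * δ2 * (vh t + δ1 * ch) ≤ q2 * δ2 * (vL t + δ1 * C) :=
        mul_le_mul_of_nonneg_left hICt (le_of_lt (mul_pos hq2 (lt_trans hδ1 hδ12)))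
      have h2' : δ1 * β * C ≤ δ1 * β * (G (t + 1)) :=
        mul_le_mul_of_nonneg_left hIH (le_of_lt (mul_pos hδ1 hβ0))
      have f1 : δ1 * ((A * vL t - KK * vh t) + β * G (t + 1))
          = β * vL t - (q2 * (δ2 - δ1)) * vh t + δ1 * β * G (t + 1) := by
        linear_combination vL t * eA - vh t * eK
      have f3 : β * vL t = q1 * δ1 * vL t + q2 * δ2 * vL t := by rw [hβ]; ring
      have f5 : δ1 * β * C = q1 * δ1 * (δ1 * C) + q2 * δ2 * (δ1 * C) := by rw [hβ]; ring
      nlinarith [h1, h2', f1, f3, f5]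
  have hpay := payoff_eq ![δ1, δ2] ![q1, q2] P hT hq01 δ1 (fun _ => 0)
  have hclaim2 := claim (T - 2) 2 le_rfl (by omega) (by omega)
  rw [show (2 : ℕ) - 1 = 1 from rfl] at hclaim2
  have step : payoffIV T 2 ![δ1, δ2] ![q1, q2] δ1 P ≤ vL 1 + δ1 * G 2 := by
    rw [hpay]
    have := mul_le_mul_of_nonneg_left hclaim2 (le_of_lt hδ1)
    show P.v 1 (fun _ => 0) + δ1 * contA T 2 ![δ1, δ2] ![q1, q2] P.v 1 (fun _ => 0) ≤ _
    have hX : P.v 1 (fun _ => 0) = vL 1 := rfl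
    rw [hX]
    linarith
  have key := GS_to_obj T hT β δ1 A KK eA vL vh
  rw [← hG] at key
  have epen : ∑ τ ∈ Finset.Icc 2 (T - 1), β ^ (τ - 2) * (δ1 * KK) * vh τ
      = ∑ τ ∈ Finset.Icc 2 (T - 1), β ^ (τ - 2) * (q2 * (δ2 - δ1))
          * P.v τ (fun s => if (s : ℕ) + 2 = τ then 1 else 0) := by
    apply Finset.sum_congr rfl
    intro τ _
    rw [eK]
  rw [epen] at key
  linarith
end BOUND

/-- Lemma 2 (structure of the solution to Problem II).  A maximizer of
Problem II exists, and every maximizer `P` satisfies: (i) `P.v t (L^{t-1}, δ₂) = 0`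
for `t ∈ {2,…,T-1}` (the path with the single high draw at date `t`); (ii) the values
`(P.v t (L^t))` are the unique maximizer of the reduced problem; (iii) the agent's
expected payoff at `P` equals the reduced problem's maximized value. -/
theorem stmt5
    (T : ℕ) (hT : 3 ≤ T)
    (R I : ℝ) (hR : 1 ≤ R) (hI : 0 < I)
    (φ : ℝ → ℝ)
    (hφc : ContinuousOn φ (Set.Ici 0))
    (hφm : StrictMonoOn φ (Set.Ici 0))
    (hφconv : StrictConvexOn ℝ (Set.Ici 0) φ)
    (hφd : ContDiffOn ℝ 2 φ (Set.Ioi 0))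
    (hφ0 : φ 0 = 0)
    (hφtend : Filter.Tendsto (deriv φ) Filter.atTop Filter.atTop)
    (δ1 δ2 q1 q2 β : ℝ) (hδ1 : 0 < δ1) (hδ12 : δ1 < δ2)
    (hq1 : 0 < q1) (hq2 : 0 < q2) (hqsum : q1 + q2 = 1)
    (hβ : β = q1 * δ1 + q2 * δ2) :
    -- a maximizer of Problem II exists
    (∃ P : PolicyIV T 2, FeasII T δ1 δ2 q1 q2 φ R I P ∧
      ∀ Q : PolicyIV T 2, FeasII T δ1 δ2 q1 q2 φ R I Q →
        payoffIV T 2 ![δ1, δ2] ![q1, q2] δ1 Q ≤ payoffIV T 2 ![δ1, δ2] ![q1, q2] δ1 P) ∧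
    -- every maximizer has the stated structure
    (∀ P : PolicyIV T 2,
      (FeasII T δ1 δ2 q1 q2 φ R I P ∧
        ∀ Q : PolicyIV T 2, FeasII T δ1 δ2 q1 q2 φ R I Q →
          payoffIV T 2 ![δ1, δ2] ![q1, q2] δ1 Q ≤ payoffIV T 2 ![δ1, δ2] ![q1, q2] δ1 P) →
      -- (i) zero utility at the histories (L^{t-1}, δ₂)
      (∀ t ∈ Finset.Icc 2 (T - 1),
        P.v t (fun s => if (s : ℕ) + 2 = t then 1 else 0) = 0) ∧
      -- (ii) the all-low utilities maximize the reduced problem …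
      FeasRed T φ R I (fun t => P.v t (fun _ => 0)) ∧
      (∀ u : ℕ → ℝ, FeasRed T φ R I u →
        objRed T β δ1 u ≤ objRed T β δ1 (fun t => P.v t (fun _ => 0))) ∧
      -- … and are its unique maximizer
      (∀ u : ℕ → ℝ, FeasRed T φ R I u →
        objRed T β δ1 u = objRed T β δ1 (fun t => P.v t (fun _ => 0)) →
        ∀ t ∈ Finset.Icc 1 T, u t = P.v t (fun _ => 0)) ∧
      -- (iii) the agent's expected payoff equals the reduced maximized value
      payoffIV T 2 ![δ1, δ2] ![q1, q2] δ1 P =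
        objRed T β δ1 (fun t => P.v t (fun _ => 0))) := by
  have hδ2 : 0 < δ2 := lt_trans hδ1 hδ12
  have hβ0 : 0 < β := by
    rw [hβ]
    nlinarith [mul_pos hq1 hδ1, mul_pos hq2 hδ2]
  have hβnn : 0 ≤ β := le_of_lt hβ0
  set a : ℝ := β / δ1 with ha
  have ha0 : 0 ≤ a := le_of_lt (div_pos hβ0 hδ1)
  obtain ⟨ust, hufeas, huopt⟩ := red_exists T hT R I hR hI φ hφc hφm hφd hφ0 hφtend β δ1
  set Pstar := Pu T δ1 β a ust with hPs
  have hPsFeas : FeasII T δ1 δ2 q1 q2 φ R I Pstar :=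
    ⟨Pu_nonneg T δ1 β a ust φ R I hT hδ1 hβnn ha0 hufeas,
     Pu_IC T δ1 δ2 q1 q2 β a ust φ R I hT hδ1 hδ12 hqsum hβ ha hufeas,
     Pu_cost T δ1 β a ust φ R I hT hufeas⟩
  have hPsPay : payoffIV T 2 ![δ1, δ2] ![q1, q2] δ1 Pstar = objRed T β δ1 ust :=
    Pu_payoff T δ1 δ2 q1 q2 β a ust hT hδ1 hqsum hβ ha
  have hbound : ∀ Q : PolicyIV T 2, FeasII T δ1 δ2 q1 q2 φ R I Q →
      payoffIV T 2 ![δ1, δ2] ![q1, q2] δ1 Q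
        + ∑ τ ∈ Finset.Icc 2 (T - 1), β ^ (τ - 2) * (q2 * (δ2 - δ1))
            * Q.v τ (fun s => if (s : ℕ) + 2 = τ then 1 else 0)
      ≤ objRed T β δ1 (fun t => Q.v t (fun _ => 0)) :=
    fun Q hQ => payoff_bound T δ1 δ2 q1 q2 β hT hδ1 hδ12 hq1 hq2 hqsum hβ Q hQ.1 hQ.2.1
  have hlowfeas : ∀ Q : PolicyIV T 2, FeasII T δ1 δ2 q1 q2 φ R I Q →
      FeasRed T φ R I (fun t => Q.v t (fun _ => 0)) :=
    fun Q hQ => ⟨fun t ht => hQ.1 t ht _, hQ.2.2⟩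
  have hpenn : ∀ Q : PolicyIV T 2, FeasII T δ1 δ2 q1 q2 φ R I Q →
      ∀ τ ∈ Finset.Icc 2 (T - 1), 0 ≤ β ^ (τ - 2) * (q2 * (δ2 - δ1))
            * Q.v τ (fun s => if (s : ℕ) + 2 = τ then 1 else 0) := by
    intro Q hQ τ hτ
    rw [Finset.mem_Icc] at hτ
    apply mul_nonneg
    · apply mul_nonneg (pow_nonneg hβnn _)
      nlinarith
    · exact hQ.1 τ (by rw [Finset.mem_Icc]; omega) _
  have hpen : ∀ Q : PolicyIV T 2, FeasII T δ1 δ2 q1 q2 φ R I Q →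
      0 ≤ ∑ τ ∈ Finset.Icc 2 (T - 1), β ^ (τ - 2) * (q2 * (δ2 - δ1))
            * Q.v τ (fun s => if (s : ℕ) + 2 = τ then 1 else 0) :=
    fun Q hQ => Finset.sum_nonneg (hpenn Q hQ)
  have hQle : ∀ Q : PolicyIV T 2, FeasII T δ1 δ2 q1 q2 φ R I Q →
      payoffIV T 2 ![δ1, δ2] ![q1, q2] δ1 Q ≤ objRed T β δ1 ust := by
    intro Q hQ
    have h1 := hbound Q hQ
    have h2 := hpen Q hQ
    have h3 := huopt _ (hlowfeas Q hQ)
    linarith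
  constructor
  · exact ⟨Pstar, hPsFeas, fun Q hQ => by rw [hPsPay]; exact hQle Q hQ⟩
  rintro P ⟨hPfeas, hPmax⟩
  have hPlow := hlowfeas P hPfeas
  have h1 : payoffIV T 2 ![δ1, δ2] ![q1, q2] δ1 P = objRed T β δ1 ust :=
    le_antisymm (hQle P hPfeas) (by rw [← hPsPay]; exact hPmax Pstar hPsFeas)
  have h2 : objRed T β δ1 (fun t => P.v t (fun _ => 0)) ≤ objRed T β δ1 ust :=
    huopt _ hPlow
  have h3 := hbound P hPfeas
  have hpen0 : ∑ τ ∈ Finset.Icc 2 (T - 1), β ^ (τ - 2) * (q2 * (δ2 - δ1))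
      * P.v τ (fun s => if (s : ℕ) + 2 = τ then 1 else 0) = 0 :=
    le_antisymm (by linarith) (hpen P hPfeas)
  have hloweq : objRed T β δ1 (fun t => P.v t (fun _ => 0)) = objRed T β δ1 ust := by
    have := hpen P hPfeas
    exact le_antisymm h2 (by linarith)
  refine ⟨?_, hPlow, ?_, ?_, ?_⟩
  · intro t ht
    have hz := (Finset.sum_eq_zero_iff_of_nonneg (hpenn P hPfeas)).1 hpen0 t ht
    rw [Finset.mem_Icc] at ht
    have hco : 0 < β ^ (t - 2) * (q2 * (δ2 - δ1)) :=
      mul_pos (pow_pos hβ0 _) (mul_pos hq2 (by linarith))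
    rcases mul_eq_zero.1 hz with h | h
    · exact absurd h (ne_of_gt hco)
    · exact h
  · intro u hu
    calc objRed T β δ1 u ≤ objRed T β δ1 ust := huopt u hu
      _ = objRed T β δ1 (fun t => P.v t (fun _ => 0)) := hloweq.symm
  · intro u hu hequ t ht
    have e1 : ust t = u t :=
      red_unique T hT R I hR hI φ hφc hφconv β δ1 ust u hufeas hu huopt
        (by rw [hequ, hloweq]) t ht
    have e2 : ust t = P.v t (fun _ => 0) :=
      red_unique T hT R I hR hI φ hφc hφconv β δ1 ust
        (fun t => P.v t (fun _ => 0)) hufeas hPlow huopt hloweq t ht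
    rw [← e1]
    exact e2
  · exact h1.trans hloweq.symm
end
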